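/- arXiv:2411.08775 — 6 statements merged into one kernel-verified Lean document; each statement's English description precedes it below -/
import Mathlib

section
/- Let m be a natural number and let V be a symmetric m×m matrix over the field 𝔽₂ = ZMod 2. Then there exist an invertible m×m matrix P over 𝔽₂ and a natural number k ≤ m such that the matrix W := PᵀVP satisfies: W i i = 1 for all indices i < k; W i i = 0 for all indices i ≥ k; and W i j = 0 whenever i ≠ j and at least one of i, j is < k. That is, every symmetric matrix over 𝔽₂ is congruent to a block diagonal sum of an identity matrix and a matrix with zero diagonal (an 'even' matrix). -/
set_option maxHeartbeats 2000000


open Matrix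

private lemma zmod2_add_self (x : ZMod 2) : x + x = 0 := by revert x; decide

private lemma zmod2_ne_zero {x : ZMod 2} (h : x ≠ 0) : x = 1 := by
  revert h; revert x; decide

private lemma aux_ind : ∀ (m : ℕ) (V : Matrix (Fin m) (Fin m) (ZMod 2)), V.IsSymm →
    ∃ P : Matrix (Fin m) (Fin m) (ZMod 2), IsUnit P.det ∧
      ∃ k : ℕ, k ≤ m ∧
        (∀ i : Fin m, (i : ℕ) < k → (Pᵀ * V * P) i i = 1) ∧
        (∀ i : Fin m, k ≤ (i : ℕ) → (Pᵀ * V * P) i i = 0) ∧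
        (∀ i j : Fin m, i ≠ j → ((i : ℕ) < k ∨ (j : ℕ) < k) → (Pᵀ * V * P) i j = 0) := by
  intro m
  induction m with
  | zero =>
    intro V _
    exact ⟨1, by simp, 0, le_rfl, fun i => i.elim0, fun i => i.elim0, fun i => i.elim0⟩
  | succ n ih =>
    intro V hsymm
    have hsymm' : ∀ a b, V a b = V b a := fun a b => by
      conv_lhs => rw [← hsymm]
      rfl
    by_cases hdiag : ∀ i, V i i = 0
    · refine ⟨1, by simp, 0, Nat.zero_le _, ?_, ?_, ?_⟩
      · intro i hi; omega
      · intro i _; simpa using hdiag i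
      · intro i j _ h; omega
    push_neg at hdiag
    obtain ⟨i0, hi0⟩ := hdiag
    have hi0' : V i0 i0 = 1 := zmod2_ne_zero hi0
    -- Step 1: permutation matrix moving i0 to position 0
    set σ : Equiv.Perm (Fin (n+1)) := Equiv.swap 0 i0 with hσ
    set Q : Matrix (Fin (n+1)) (Fin (n+1)) (ZMod 2) :=
      Matrix.of (fun a b => if a = σ b then 1 else 0) with hQ
    set Q' : Matrix (Fin (n+1)) (Fin (n+1)) (ZMod 2) :=
      Matrix.of (fun a b => if σ a = b then 1 else 0) with hQ'
    have hQQ' : Q * Q' = 1 := by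
      ext a b
      rw [Matrix.mul_apply]
      rw [Finset.sum_eq_single (σ.symm a)]
      · simp [hQ, hQ', Matrix.one_apply, eq_comm]
      · intro c _ hc
        by_cases h1 : a = σ c
        · exact absurd (by simp [h1]) hc
        · simp [hQ, h1]
      · intro h; exact absurd (Finset.mem_univ _) h
    have hdetQ : IsUnit Q.det := by
      apply IsUnit.of_mul_eq_one Q'.det
      rw [← Matrix.det_mul, hQQ', Matrix.det_one]
    set W : Matrix (Fin (n+1)) (Fin (n+1)) (ZMod 2) := Qᵀ * V * Q with hWdef
    have hVQ : ∀ a b, (V * Q) a b = V a (σ b) := by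
      intro a b
      rw [Matrix.mul_apply]
      rw [Finset.sum_eq_single (σ b)]
      · simp [hQ]
      · intro c _ hc; simp [hQ, hc]
      · intro h; exact absurd (Finset.mem_univ _) h
    have hW : ∀ a b, W a b = V (σ a) (σ b) := by
      intro a b
      rw [hWdef, Matrix.mul_assoc, Matrix.mul_apply]
      rw [Finset.sum_eq_single (σ a)]
      · rw [hVQ]; simp [hQ]
      · intro c _ hc
        simp [Matrix.transpose_apply, hQ, hc, hVQ]
      · intro h; exact absurd (Finset.mem_univ _) h
    have hWsymm : ∀ a b, W a b = W b a := fun a b => by rw [hW, hW, hsymm']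
    have hW00 : W 0 0 = 1 := by
      rw [hW]; simp [hσ, Equiv.swap_apply_left, hi0']
    -- Step 2: clear first row and column
    set N : Matrix (Fin (n+1)) (Fin (n+1)) (ZMod 2) :=
      Matrix.of (fun a b => if a = 0 then (if b = 0 then 0 else W 0 b) else 0) with hN
    set P' : Matrix (Fin (n+1)) (Fin (n+1)) (ZMod 2) := 1 + N with hP'
    have hNa0 : ∀ a, N a 0 = 0 := by intro a; simp [hN]
    have hNsq : N * N = 0 := by
      ext a b
      rw [Matrix.mul_apply]
      apply Finset.sum_eq_zero
      intro c _
      by_cases hc : c = 0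
      · subst hc; rw [hNa0]; ring
      · have : N c b = 0 := by simp [hN, hc]
        rw [this]; ring
    have hNN : N + N = 0 := by
      ext a b; exact zmod2_add_self _
    have hP'inv : P' * P' = 1 := by
      have h : P' * P' = 1 + (N + N) + N * N := by rw [hP']; noncomm_ring
      rw [h, hNN, hNsq, add_zero, add_zero]
    have hdetP' : IsUnit P'.det := by
      apply IsUnit.of_mul_eq_one P'.det
      rw [← Matrix.det_mul, hP'inv, Matrix.det_one]
    set W' : Matrix (Fin (n+1)) (Fin (n+1)) (ZMod 2) := P'ᵀ * W * P' with hW'def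
    have hP'col0 : ∀ a, P' a 0 = if a = 0 then 1 else 0 := by
      intro a
      rw [hP']
      simp [Matrix.add_apply, Matrix.one_apply, hNa0, hN]
    have hPtW : ∀ b, (P'ᵀ * W) 0 b = W 0 b := by
      intro b
      rw [Matrix.mul_apply]
      rw [Finset.sum_eq_single (0 : Fin (n+1))]
      · rw [Matrix.transpose_apply, hP'col0]; simp
      · intro c _ hc
        rw [Matrix.transpose_apply, hP'col0]
        simp [hc]
      · intro h; exact absurd (Finset.mem_univ _) h
    have hW'0 : ∀ b, W' 0 b = W 0 b + N 0 b := by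
      intro b
      rw [hW'def, Matrix.mul_apply]
      have : ∀ c : Fin (n+1), (P'ᵀ * W) 0 c * P' c b
          = W 0 c * (1 : Matrix (Fin (n+1)) (Fin (n+1)) (ZMod 2)) c b + W 0 c * N c b := by
        intro c
        rw [hPtW, hP', Matrix.add_apply, mul_add]
      rw [Finset.sum_congr rfl (fun c _ => this c), Finset.sum_add_distrib]
      congr 1
      · rw [Finset.sum_eq_single (b : Fin (n+1))]
        · simp [Matrix.one_apply]
        · intro c _ hc; simp [Matrix.one_apply, hc]
        · intro h; exact absurd (Finset.mem_univ _) h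
      · rw [Finset.sum_eq_single (0 : Fin (n+1))]
        · rw [hW00, one_mul]
        · intro c _ hc
          have : N c b = 0 := by simp [hN, hc]
          rw [this, mul_zero]
        · intro h; exact absurd (Finset.mem_univ _) h
    have hW'00 : W' 0 0 = 1 := by
      rw [hW'0, hW00]
      simp [hN]
    have hW'0succ : ∀ j : Fin n, W' 0 j.succ = 0 := by
      intro j
      rw [hW'0]
      have : N 0 j.succ = W 0 j.succ := by
        simp [hN, Fin.succ_ne_zero]
      rw [this, zmod2_add_self]
    have hW'symm : ∀ a b, W' a b = W' b a := by
      have hWt : Wᵀ = W := by ext a b; rw [Matrix.transpose_apply, hWsymm]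
      have h : W'ᵀ = W' := by
        rw [hW'def, Matrix.transpose_mul, Matrix.transpose_mul, Matrix.transpose_transpose,
          hWt]
        exact (Matrix.mul_assoc _ _ _).symm
      intro a b
      conv_lhs => rw [← h]
      rfl
    have hW'succ0 : ∀ j : Fin n, W' j.succ 0 = 0 := fun j => by
      rw [hW'symm, hW'0succ]
    -- Step 3: induction on the lower-right block
    set V₁ : Matrix (Fin n) (Fin n) (ZMod 2) :=
      Matrix.of (fun a b => W' a.succ b.succ) with hV₁
    have hV₁symm : V₁.IsSymm := by
      ext a b
      rw [Matrix.transpose_apply]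
      simp only [hV₁, Matrix.of_apply]
      rw [hW'symm]
    obtain ⟨P₁, hP₁det, k₁, hk₁, h1, h2, h3⟩ := ih V₁ hV₁symm
    have hP₁unit : IsUnit P₁ := (Matrix.isUnit_iff_isUnit_det _).mpr hP₁det
    obtain ⟨u, hu⟩ := hP₁unit
    set B : Matrix (Fin n) (Fin n) (ZMod 2) := ↑u⁻¹ with hB
    have hP₁B : P₁ * B = 1 := by rw [hB, ← hu]; exact u.mul_inv
    -- block matrix P₂ = diag(1, P₁)
    set P₂ : Matrix (Fin (n+1)) (Fin (n+1)) (ZMod 2) :=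
      Matrix.of (Fin.cons (fun j => if j = 0 then 1 else 0)
        (fun i' => Fin.cons 0 (fun j' => P₁ i' j'))) with hP₂
    set B₂ : Matrix (Fin (n+1)) (Fin (n+1)) (ZMod 2) :=
      Matrix.of (Fin.cons (fun j => if j = 0 then 1 else 0)
        (fun i' => Fin.cons 0 (fun j' => B i' j'))) with hB₂
    have hP₂00 : P₂ 0 0 = 1 := by simp [hP₂]
    have hP₂0succ : ∀ j : Fin n, P₂ 0 j.succ = 0 := by
      intro j; simp [hP₂, Fin.succ_ne_zero]
    have hP₂succ0 : ∀ i : Fin n, P₂ i.succ 0 = 0 := by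
      intro i; simp [hP₂]
    have hP₂succ : ∀ i j : Fin n, P₂ i.succ j.succ = P₁ i j := by
      intro i j; simp [hP₂]
    have hP₂B₂ : P₂ * B₂ = 1 := by
      ext i j
      rw [Matrix.mul_apply, Fin.sum_univ_succ]
      rcases Fin.eq_zero_or_eq_succ i with rfl | ⟨i', rfl⟩
      · rcases Fin.eq_zero_or_eq_succ j with rfl | ⟨j', rfl⟩
        · simp [hP₂, hB₂, Matrix.one_apply]
        · simp [hP₂, hB₂, Matrix.one_apply, Fin.succ_ne_zero, (Fin.succ_ne_zero j').symm]
      · rcases Fin.eq_zero_or_eq_succ j with rfl | ⟨j', rfl⟩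
        · simp [hP₂, hB₂, Matrix.one_apply, Fin.succ_ne_zero]
        · have : ∀ a : Fin n, P₂ i'.succ a.succ * B₂ a.succ j'.succ = P₁ i' a * B a j' := by
            intro a; rw [hP₂succ]; simp [hB₂]
          rw [hP₂succ0, zero_mul, zero_add, Finset.sum_congr rfl (fun a _ => this a)]
          rw [← Matrix.mul_apply, hP₁B]
          simp [Matrix.one_apply, Fin.succ_inj]
    have hdetP₂ : IsUnit P₂.det := by
      apply IsUnit.of_mul_eq_one B₂.det
      rw [← Matrix.det_mul, hP₂B₂, Matrix.det_one]
    set M : Matrix (Fin (n+1)) (Fin (n+1)) (ZMod 2) := P₂ᵀ * W' * P₂ with hMdef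
    -- entries of M
    have hcol : ∀ a, P₂ a 0 = if a = 0 then 1 else 0 := by
      intro a
      rcases Fin.eq_zero_or_eq_succ a with rfl | ⟨a', rfl⟩
      · simp [hP₂00]
      · simp [hP₂succ0, Fin.succ_ne_zero]
    have hPtW'0 : ∀ b, (P₂ᵀ * W') 0 b = W' 0 b := by
      intro b
      rw [Matrix.mul_apply]
      rw [Finset.sum_eq_single (0 : Fin (n+1))]
      · rw [Matrix.transpose_apply, hcol]; simp
      · intro c _ hc; rw [Matrix.transpose_apply, hcol]; simp [hc]
      · intro h; exact absurd (Finset.mem_univ _) h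
    have hM00 : M 0 0 = 1 := by
      rw [hMdef, Matrix.mul_apply]
      rw [Finset.sum_eq_single (0 : Fin (n+1))]
      · rw [hPtW'0, hW'00, hcol]; simp
      · intro c _ hc; rw [hcol]; simp [hc]
      · intro h; exact absurd (Finset.mem_univ _) h
    have hM0succ : ∀ j : Fin n, M 0 j.succ = 0 := by
      intro j
      rw [hMdef, Matrix.mul_apply, Fin.sum_univ_succ]
      rw [hPtW'0, hW'00, hP₂0succ, mul_zero, zero_add]
      apply Finset.sum_eq_zero
      intro c _
      rw [hPtW'0, hW'0succ, zero_mul]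
    have hPtW'succ : ∀ (i' : Fin n) (b : Fin (n+1)),
        (P₂ᵀ * W') i'.succ b = ∑ c : Fin n, P₁ c i' * W' c.succ b := by
      intro i' b
      rw [Matrix.mul_apply, Fin.sum_univ_succ, Matrix.transpose_apply, hP₂0succ, zero_mul,
        zero_add]
      apply Finset.sum_congr rfl
      intro c _
      rw [Matrix.transpose_apply, hP₂succ]
    have hMsucc0 : ∀ i : Fin n, M i.succ 0 = 0 := by
      intro i
      rw [hMdef, Matrix.mul_apply]
      rw [Finset.sum_eq_single (0 : Fin (n+1))]
      · rw [hPtW'succ, hcol, if_pos rfl, mul_one]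
        exact Finset.sum_eq_zero fun c _ => by rw [hW'succ0, mul_zero]
      · intro c _ hc; rw [hcol]; simp [hc]
      · intro h; exact absurd (Finset.mem_univ _) h
    have hMsucc : ∀ i j : Fin n, M i.succ j.succ = (P₁ᵀ * V₁ * P₁) i j := by
      intro i j
      have hterm : ∀ c, (P₁ᵀ * V₁) i c = ∑ d : Fin n, P₁ d i * W' d.succ c.succ := by
        intro c
        rw [Matrix.mul_apply]
        apply Finset.sum_congr rfl
        intro d _
        rw [Matrix.transpose_apply, hV₁, Matrix.of_apply]
      rw [hMdef, Matrix.mul_apply, Fin.sum_univ_succ, hP₂0succ, mul_zero, zero_add]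
      rw [Matrix.mul_apply]
      apply Finset.sum_congr rfl
      intro c _
      rw [hPtW'succ, hP₂succ, ← hterm c]
    -- assemble
    have hfinal : (Q * P' * P₂)ᵀ * V * (Q * P' * P₂) = M := by
      rw [hMdef, hW'def, hWdef]
      simp only [Matrix.transpose_mul, Matrix.mul_assoc]
    refine ⟨Q * P' * P₂, ?_, k₁ + 1, by omega, ?_, ?_, ?_⟩
    · rw [Matrix.det_mul, Matrix.det_mul]
      exact (hdetQ.mul hdetP').mul hdetP₂
    · intro i hi
      rw [hfinal]
      rcases Fin.eq_zero_or_eq_succ i with rfl | ⟨i', rfl⟩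
      · exact hM00
      · rw [hMsucc]
        apply h1
        have := Fin.val_succ i' ▸ hi
        omega
    · intro i hi
      rw [hfinal]
      rcases Fin.eq_zero_or_eq_succ i with rfl | ⟨i', rfl⟩
      · simp at hi
      · rw [hMsucc]
        apply h2
        have := Fin.val_succ i' ▸ hi
        omega
    · intro i j hij hk
      rw [hfinal]
      rcases Fin.eq_zero_or_eq_succ i with rfl | ⟨i', rfl⟩
      · rcases Fin.eq_zero_or_eq_succ j with rfl | ⟨j', rfl⟩
        · exact absurd rfl hij
        · exact hM0succ j'
      · rcases Fin.eq_zero_or_eq_succ j with rfl | ⟨j', rfl⟩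
        · exact hMsucc0 i'
        · rw [hMsucc]
          apply h3
          · intro h; exact hij (by rw [h])
          · rcases hk with hk | hk
            · left; have := Fin.val_succ i' ▸ hk; omega
            · right; have := Fin.val_succ j' ▸ hk; omega

/-- Every symmetric matrix over `𝔽₂` is congruent to a block diagonal sum of an
identity matrix and an even matrix (a matrix with zero diagonal). -/
theorem symm_matrix_mod_two_congruent_diag_plus_even (m : ℕ)
    (V : Matrix (Fin m) (Fin m) (ZMod 2)) (hsymm : V.IsSymm) :
    ∃ P : Matrix (Fin m) (Fin m) (ZMod 2), IsUnit P.det ∧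
      ∃ k : ℕ, k ≤ m ∧
        (∀ i : Fin m, (i : ℕ) < k → (Pᵀ * V * P) i i = 1) ∧
        (∀ i : Fin m, k ≤ (i : ℕ) → (Pᵀ * V * P) i i = 0) ∧
        (∀ i j : Fin m, i ≠ j → ((i : ℕ) < k ∨ (j : ℕ) < k) → (Pᵀ * V * P) i j = 0) := by
  exact aux_ind m V hsymm
end

section
/- Let V be a symmetric m×m integer matrix with det V = 1 or det V = −1. Then there exists an m×m integer matrix P with det P ≠ 0 such that PᵀVP is a diagonal matrix (all off-diagonal entries are zero). -/
set_option maxHeartbeats 1000000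


open Matrix

lemma aux_int_clear (d : ℕ) (q : ℚ) (h : q.den ∣ d) : ∃ z : ℤ, (z : ℚ) = (d : ℚ) * q := by
  obtain ⟨k, hk⟩ := h
  refine ⟨(k : ℤ) * q.num, ?_⟩
  have hden : ((q.den : ℚ)) * q = (q.num : ℚ) := by
    rw [mul_comm]
    exact (eq_div_iff (by exact_mod_cast q.den_nz)).mp (Rat.num_div_den q).symm
  push_cast
  rw [hk]
  push_cast
  rw [mul_comm (q.den : ℚ) (k : ℚ), mul_assoc, hden]

/-- Every symmetric unimodular integer matrix is congruent over `ℚ` (via an integer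
matrix with nonzero determinant) to an integral diagonal matrix. -/
theorem exists_integral_diagonalization (m : ℕ)
    (V : Matrix (Fin m) (Fin m) ℤ) (hsymm : V.IsSymm)
    (hdet : V.det = 1 ∨ V.det = -1) :
    ∃ P : Matrix (Fin m) (Fin m) ℤ, P.det ≠ 0 ∧ (Pᵀ * V * P).IsDiag := by
  classical
  -- the rational matrix
  set W : Matrix (Fin m) (Fin m) ℚ := V.map ((↑) : ℤ → ℚ) with hW
  have hWs : ∀ i j, W j i = W i j := by
    intro i j
    simp only [hW, Matrix.map_apply]
    exact_mod_cast congrArg (Int.cast : ℤ → ℚ) (hsymm.apply i j)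
  -- the bilinear form
  set B : LinearMap.BilinForm ℚ (Fin m → ℚ) := Matrix.toBilin' W with hB
  have hBsymm : B.IsSymm := by
    rw [LinearMap.BilinForm.isSymm_def]
    intro x y
    simp only [RingHom.id_apply, hB, Matrix.toBilin'_apply]
    rw [Finset.sum_comm]
    refine Finset.sum_congr rfl fun i _ => Finset.sum_congr rfl fun j _ => ?_
    rw [hWs i j]; ring
  have hfr : Module.finrank ℚ (Fin m → ℚ) = m := by simp
  obtain ⟨v₀, hv₀⟩ := LinearMap.BilinForm.exists_orthogonal_basis (B := B) (LinearMap.BilinForm.isSymm_iff.mp hBsymm)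
  set v : Module.Basis (Fin m) ℚ (Fin m → ℚ) := v₀.reindex (finCongr hfr) with hvdef
  have hv : ∀ i j : Fin m, i ≠ j → B (v i) (v j) = 0 := by
    intro i j hij
    rw [hvdef]
    simp only [Module.Basis.reindex_apply]
    exact hv₀ (fun h => hij (by simpa using congrArg (finCongr hfr) h))
  -- Q: columns are the basis vectors
  set Q : Matrix (Fin m) (Fin m) ℚ := Matrix.of fun k i => v i k with hQ
  have hQdet : Q.det ≠ 0 := by
    have h1 : Q = (Pi.basisFun ℚ (Fin m)).toMatrix v := by
      ext k i
      simp [hQ, Module.Basis.toMatrix_apply]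
    rw [h1, ← Module.Basis.det_apply]
    exact ((Pi.basisFun ℚ (Fin m)).isUnit_det v).ne_zero
  have hQdiag : ∀ i j : Fin m, i ≠ j → (Qᵀ * W * Q) i j = 0 := by
    intro i j hij
    have h0 : B (v i) (v j) = 0 := hv i j hij
    rw [hB, Matrix.toBilin'_apply] at h0
    simp only [Matrix.mul_apply, Matrix.transpose_apply, hQ, Matrix.of_apply, Finset.sum_mul]
    rw [Finset.sum_comm]
    exact h0
  -- clear denominators
  set d : ℕ := ∏ p : Fin m × Fin m, (Q p.1 p.2).den with hd
  have hd0 : (d : ℚ) ≠ 0 := by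
    simp only [hd]
    push_cast
    exact Finset.prod_ne_zero_iff.mpr fun p _ => by exact_mod_cast (Q p.1 p.2).den_nz
  have hint : ∀ i j, ∃ z : ℤ, (z : ℚ) = (d : ℚ) * Q i j := fun i j =>
    aux_int_clear d _ (Finset.dvd_prod_of_mem (f := fun p : Fin m × Fin m => (Q p.1 p.2).den)
      (Finset.mem_univ (i, j)))
  set P : Matrix (Fin m) (Fin m) ℤ := fun i j => (hint i j).choose with hP
  have hPQ : P.map ((↑) : ℤ → ℚ) = (d : ℚ) • Q := by
    ext i j
    exact (hint i j).choose_spec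
  refine ⟨P, ?_, ?_⟩
  · intro h
    have h2 : (P.map ((↑) : ℤ → ℚ)).det = ((P.det : ℚ)) := by
      simpa using (RingHom.map_det (Int.castRingHom ℚ) P).symm
    rw [hPQ, Matrix.det_smul, h, Int.cast_zero] at h2
    exact (mul_ne_zero (pow_ne_zero _ hd0) hQdet) h2
  · intro i j hij
    have hcast : (((Pᵀ * V * P) i j : ℤ) : ℚ) = ((Pᵀ * V * P).map ((↑) : ℤ → ℚ)) i j := rfl
    have hmap : (Pᵀ * V * P).map ((↑) : ℤ → ℚ)
        = (P.map ((↑) : ℤ → ℚ))ᵀ * W * P.map ((↑) : ℤ → ℚ) := by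
      ext i j
      simp only [hW, Matrix.map_apply, Matrix.mul_apply, Matrix.transpose_apply]
      push_cast
      rfl
    have : (((Pᵀ * V * P) i j : ℤ) : ℚ) = 0 := by
      rw [hcast, hmap, hPQ, Matrix.transpose_smul, Matrix.smul_mul, Matrix.smul_mul,
        Matrix.mul_smul]
      simp [hQdiag i j hij]
    exact_mod_cast this
end

section
/- Let m ≥ 1 and let V be a symmetric m×m integer matrix with det V = ±1 which is positive definite (i.e., xᵀVx > 0 for every nonzero real vector x). Let V⁻¹ denote its inverse, which is again an integer matrix. Then for every integer vector x ∈ ℤ^m one has ‖x‖₂ ≤ N₁(V⁻¹)·(xᵀVx), where ‖x‖₂ = sqrt(Σ_i x_i²) and N₁(A) := max over columns j of Σ_i |A i j|. -/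
open Matrix

private lemma cs_psd {m : ℕ} (W : Matrix (Fin m) (Fin m) ℝ)
    (hW : ∀ i j, W i j = W j i)
    (hpsd : ∀ v : Fin m → ℝ, 0 ≤ v ⬝ᵥ W.mulVec v) (a b : Fin m → ℝ) :
    (a ⬝ᵥ W.mulVec b) ^ 2 ≤ (a ⬝ᵥ W.mulVec a) * (b ⬝ᵥ W.mulVec b) := by
  have hsy : ∀ u v : Fin m → ℝ, u ⬝ᵥ W.mulVec v = v ⬝ᵥ W.mulVec u := by
    intro u v
    simp only [dotProduct, mulVec, Finset.mul_sum]
    rw [Finset.sum_comm]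
    congr 1; ext j; congr 1; ext i
    rw [hW i j]; ring
  have key : ∀ t : ℝ, 0 ≤ (b ⬝ᵥ W.mulVec b) * (t * t) + (2 * (a ⬝ᵥ W.mulVec b)) * t
      + (a ⬝ᵥ W.mulVec a) := by
    intro t
    have h := hpsd (a + t • b)
    have expand : (a + t • b) ⬝ᵥ W.mulVec (a + t • b) =
        (b ⬝ᵥ W.mulVec b) * (t * t) + (2 * (a ⬝ᵥ W.mulVec b)) * t + (a ⬝ᵥ W.mulVec a) := by
      rw [Matrix.mulVec_add, Matrix.mulVec_smul, dotProduct_add, add_dotProduct,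
        add_dotProduct, smul_dotProduct, dotProduct_smul, smul_dotProduct, dotProduct_smul,
        hsy b a]
      simp only [smul_eq_mul]
      ring
    linarith [expand ▸ h]
  have hd := discrim_le_zero key
  rw [discrim] at hd
  nlinarith [hd]

private lemma entry_bound {m : ℕ} (W : Matrix (Fin m) (Fin m) ℝ)
    (hW : ∀ i j, W i j = W j i) (c : ℝ)
    (hcol : ∀ j, ∑ i, |W i j| ≤ c) (v : Fin m → ℝ) :
    v ⬝ᵥ W.mulVec v ≤ c * ∑ i, v i ^ 2 := by
  have h2 : 2 * (v ⬝ᵥ W.mulVec v) ≤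
      (∑ i, ∑ j, |W i j| * v i ^ 2) + (∑ i, ∑ j, |W i j| * v j ^ 2) := by
    have : 2 * (v ⬝ᵥ W.mulVec v) = ∑ i, ∑ j, 2 * (v i * (W i j * v j)) := by
      simp only [dotProduct, mulVec, Finset.mul_sum]
    rw [this, ← Finset.sum_add_distrib]
    refine Finset.sum_le_sum fun i _ => ?_
    rw [← Finset.sum_add_distrib]
    refine Finset.sum_le_sum fun j _ => ?_
    have h1 : W i j ≤ |W i j| := le_abs_self _
    have h2 : -|W i j| ≤ W i j := neg_abs_le _
    nlinarith [sq_nonneg (v i - v j), sq_nonneg (v i + v j), abs_nonneg (W i j)]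
  have hrow : ∀ i, ∑ j, |W i j| ≤ c := by
    intro i
    have : ∑ j, |W i j| = ∑ j, |W j i| := by
      refine Finset.sum_congr rfl fun j _ => by rw [hW i j]
    rw [this]; exact hcol i
  have hA : (∑ i, ∑ j, |W i j| * v i ^ 2) ≤ c * ∑ i, v i ^ 2 := by
    rw [Finset.mul_sum]
    refine Finset.sum_le_sum fun i _ => ?_
    rw [← Finset.sum_mul]
    exact mul_le_mul_of_nonneg_right (hrow i) (sq_nonneg _)
  have hB : (∑ i, ∑ j, |W i j| * v j ^ 2) ≤ c * ∑ i, v i ^ 2 := by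
    rw [Finset.sum_comm, Finset.mul_sum]
    refine Finset.sum_le_sum fun j _ => ?_
    rw [← Finset.sum_mul]
    exact mul_le_mul_of_nonneg_right (hcol j) (sq_nonneg _)
  linarith

/-- For a positive definite, symmetric, unimodular integer matrix `V`, the Euclidean
norm of any integer vector `x` is bounded by `N₁(V⁻¹) · (xᵀVx)`. -/
theorem norm_le_of_posDef_unimodular (m : ℕ) (hm : 1 ≤ m)
    (V : Matrix (Fin m) (Fin m) ℤ) (hsymm : V.IsSymm)
    (hdet : V.det = 1 ∨ V.det = -1)
    (hpos : (V.map ((↑) : ℤ → ℝ)).PosDef) :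
    ∀ x : Fin m → ℤ,
      Real.sqrt (∑ i : Fin m, ((x i : ℝ)) ^ 2) ≤
        ((Finset.univ.sup' (Finset.univ_nonempty_iff.mpr ⟨⟨0, hm⟩⟩)
            (fun j : Fin m => ∑ i : Fin m, |V⁻¹ i j|) : ℤ) : ℝ) *
          ((x ⬝ᵥ V.mulVec x : ℤ) : ℝ) := by
  intro x
  set N : ℤ := Finset.univ.sup' (Finset.univ_nonempty_iff.mpr ⟨⟨0, hm⟩⟩)
      (fun j : Fin m => ∑ i : Fin m, |V⁻¹ i j|) with hN
  by_cases hx : x = 0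
  · subst hx
    simp
  -- setup
  have hUnit : IsUnit V.det := by
    rcases hdet with h | h <;> simp [h, isUnit_iff_exists_inv] <;> exact ⟨-1, by ring⟩
  have hWA : V⁻¹ * V = 1 := Matrix.nonsing_inv_mul V hUnit
  set A : Matrix (Fin m) (Fin m) ℝ := V.map ((↑) : ℤ → ℝ) with hA
  set W : Matrix (Fin m) (Fin m) ℝ := (V⁻¹).map ((↑) : ℤ → ℝ) with hW
  have hWAone : W * A = 1 := by
    rw [hW, hA]
    have : (V⁻¹ * V).map ((Int.castRingHom ℝ) : ℤ →+* ℝ) = V⁻¹.map (Int.castRingHom ℝ) * V.map (Int.castRingHom ℝ) := Matrix.map_mul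
    simp only [Int.coe_castRingHom] at this
    rw [← this, hWA]
    simp
  have hAinv : A⁻¹ = W := Matrix.inv_eq_left_inv hWAone
  have hWposdef : W.PosDef := hAinv ▸ hpos.inv
  have hWsymEntry : ∀ i j, W i j = W j i := by
    have hVinvsymm : (V⁻¹)ᵀ = V⁻¹ := by
      rw [Matrix.transpose_nonsing_inv, hsymm]
    intro i j
    have := congrFun (congrFun hVinvsymm i) j
    simp only [Matrix.transpose_apply] at this
    simp [hW, Matrix.map_apply, ← this]
  set xR : Fin m → ℝ := fun i => (x i : ℝ) with hxR
  have hxRne : xR ≠ 0 := by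
    intro h
    apply hx
    funext i
    have := congrFun h i
    simpa [hxR] using this
  set s : ℝ := ∑ i, xR i ^ 2 with hs
  set QR : ℝ := xR ⬝ᵥ A.mulVec xR with hQR
  have hQRpos : 0 < QR := by
    have := hpos.dotProduct_mulVec_pos hxRne
    simpa [hQR] using this
  -- cast of the quadratic form
  have hQcast : ((x ⬝ᵥ V.mulVec x : ℤ) : ℝ) = QR := by
    simp only [hQR, dotProduct, Matrix.mulVec, hA, Matrix.map_apply, hxR]
    push_cast
    ring_nf
  -- x = W (A x)
  set y : Fin m → ℝ := A.mulVec xR with hy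
  have hWy : W.mulVec y = xR := by
    rw [hy, Matrix.mulVec_mulVec, hWAone, Matrix.one_mulVec]
  have hsw : s = xR ⬝ᵥ W.mulVec y := by
    rw [hWy]
    simp [hs, dotProduct, sq]
  have hyWy : y ⬝ᵥ W.mulVec y = QR := by
    rw [hWy, hy, dotProduct_comm]
  -- Cauchy-Schwarz
  have hpsd : ∀ v : Fin m → ℝ, 0 ≤ v ⬝ᵥ W.mulVec v := by
    intro v
    have := hWposdef.posSemidef.dotProduct_mulVec_nonneg v
    simpa using this
  have hCS := cs_psd W hWsymEntry hpsd xR y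
  -- column bound
  have hcol : ∀ j, ∑ i, |W i j| ≤ (N : ℝ) := by
    intro j
    have h1 : (∑ i, |V⁻¹ i j|) ≤ N :=
      Finset.le_sup' (fun j : Fin m => ∑ i : Fin m, |V⁻¹ i j|) (Finset.mem_univ j)
    calc ∑ i, |W i j| = ((∑ i, |V⁻¹ i j| : ℤ) : ℝ) := by
          push_cast [hW, Matrix.map_apply]
          rfl
      _ ≤ (N : ℝ) := by exact_mod_cast h1
  have hEB := entry_bound W hWsymEntry (N : ℝ) hcol xR
  -- s ≥ 1
  have hs1 : 1 ≤ s := by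
    obtain ⟨i, hi⟩ : ∃ i, x i ≠ 0 := by
      by_contra h
      push_neg at h
      exact hx (funext h)
    have h1 : (1 : ℝ) ≤ xR i ^ 2 := by
      have : 1 ≤ |x i| := Int.one_le_abs hi
      have : (1 : ℝ) ≤ |(x i : ℝ)| := by exact_mod_cast this
      calc (1:ℝ) = 1 ^ 2 := by norm_num
        _ ≤ |(x i : ℝ)| ^ 2 := by
            apply pow_le_pow_left₀ (by norm_num) this
        _ = xR i ^ 2 := by rw [sq_abs]
    calc (1 : ℝ) ≤ xR i ^ 2 := h1
      _ ≤ s := Finset.single_le_sum (fun i _ => sq_nonneg (xR i)) (Finset.mem_univ i)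
  have hspos : 0 < s := lt_of_lt_of_le one_pos hs1
  -- combine: s^2 ≤ (N * s) * QR
  have hcombine : s ^ 2 ≤ ((N : ℝ) * s) * QR := by
    calc s ^ 2 = (xR ⬝ᵥ W.mulVec y) ^ 2 := by rw [hsw]
      _ ≤ (xR ⬝ᵥ W.mulVec xR) * (y ⬝ᵥ W.mulVec y) := hCS
      _ ≤ ((N : ℝ) * s) * QR := by
          rw [hyWy]
          exact mul_le_mul_of_nonneg_right (le_trans hEB (le_of_eq rfl)) hQRpos.le
  have hfinal : s ≤ (N : ℝ) * QR := by
    have h := hcombine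
    have : s * s ≤ ((N : ℝ) * QR) * s := by nlinarith
    exact le_of_mul_le_mul_right (by linarith [this]) hspos
  calc Real.sqrt s ≤ Real.sqrt (s * s) := Real.sqrt_le_sqrt (by nlinarith)
    _ = s := Real.sqrt_mul_self hspos.le
    _ ≤ (N : ℝ) * QR := hfinal
    _ = (N : ℝ) * ((x ⬝ᵥ V.mulVec x : ℤ) : ℝ) := by rw [hQcast]
end

section
/- Let m ≥ 1 and let V and V′ be symmetric m×m integer matrices with determinant ±1, with V positive definite. Set R := max_{i} V′_{ii} (the maximum diagonal entry of V′). If P is an m×m integer matrix satisfying PᵀVP = V′, then every column p of P satisfies ‖p‖₂ ≤ N₁(V⁻¹)·R, where V⁻¹ is the integer inverse of V. -/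
open Matrix

lemma aux_cs {m : ℕ} (A : Matrix (Fin m) (Fin m) ℝ) (hA : A.PosSemidef)
    (x y : Fin m → ℝ) :
    (x ⬝ᵥ A *ᵥ y) ^ 2 ≤ (x ⬝ᵥ A *ᵥ x) * (y ⬝ᵥ A *ᵥ y) := by
  have hsym : ∀ u v : Fin m → ℝ, u ⬝ᵥ A *ᵥ v = v ⬝ᵥ A *ᵥ u := by
    intro u v
    have h1 : Aᵀ = A := hA.1
    calc u ⬝ᵥ A *ᵥ v = u ᵥ* A ⬝ᵥ v := by rw [dotProduct_mulVec]
    _ = (Aᵀ *ᵥ u) ⬝ᵥ v := by rw [mulVec_transpose]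
    _ = (A *ᵥ u) ⬝ᵥ v := by rw [h1]
    _ = v ⬝ᵥ A *ᵥ u := dotProduct_comm _ _
  have key : ∀ t : ℝ, 0 ≤ (y ⬝ᵥ A *ᵥ y) * (t * t) + (2 * (x ⬝ᵥ A *ᵥ y)) * t
      + (x ⬝ᵥ A *ᵥ x) := by
    intro t
    have h0 : 0 ≤ (x + t • y) ⬝ᵥ A *ᵥ (x + t • y) := by
      have := hA.dotProduct_mulVec_nonneg (x + t • y)
      simpa using this
    have hexp : (x + t • y) ⬝ᵥ A *ᵥ (x + t • y)
        = (y ⬝ᵥ A *ᵥ y) * (t * t) + (2 * (x ⬝ᵥ A *ᵥ y)) * t + (x ⬝ᵥ A *ᵥ x) := by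
      simp only [mulVec_add, mulVec_smul, add_dotProduct, dotProduct_add, smul_dotProduct,
        dotProduct_smul, smul_eq_mul]
      rw [hsym y x]
      ring
    rw [hexp] at h0
    exact h0
  have := discrim_le_zero key
  rw [discrim] at this
  nlinarith [this]

lemma aux_colbound {m : ℕ} (A : Matrix (Fin m) (Fin m) ℝ) (hA : Aᵀ = A)
    (N : ℝ) (hN : ∀ l, ∑ i, |A i l| ≤ N) (x : Fin m → ℝ) :
    x ⬝ᵥ A *ᵥ x ≤ N * (x ⬝ᵥ x) := by
  have habs : ∀ i l, A i l = A l i := by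
    intro i l; nth_rewrite 1 [← hA]; rfl
  have h1 : x ⬝ᵥ A *ᵥ x = ∑ i, ∑ l, x i * A i l * x l := by
    simp [dotProduct, mulVec, Finset.mul_sum, mul_assoc]
  have h2 : ∑ i, ∑ l, 2 * (x i * A i l * x l) ≤ ∑ i, ∑ l, |A i l| * (x i ^ 2 + x l ^ 2) := by
    apply Finset.sum_le_sum; intro i _
    apply Finset.sum_le_sum; intro l _
    have ha : x i * A i l * x l ≤ |A i l| * (|x i| * |x l|) := by
      calc x i * A i l * x l ≤ |x i * A i l * x l| := le_abs_self _
      _ = |A i l| * (|x i| * |x l|) := by rw [abs_mul, abs_mul]; ring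
    have hb : 2 * (|x i| * |x l|) ≤ x i ^ 2 + x l ^ 2 := by
      nlinarith [sq_nonneg (|x i| - |x l|), sq_abs (x i), sq_abs (x l)]
    nlinarith [abs_nonneg (A i l), ha, hb]
  have hsplit : ∑ i, ∑ l, |A i l| * (x i ^ 2 + x l ^ 2)
      = (∑ i, x i ^ 2 * ∑ l, |A i l|) + (∑ l, x l ^ 2 * ∑ i, |A i l|) := by
    simp only [mul_add, Finset.sum_add_distrib]
    congr 1
    · apply Finset.sum_congr rfl; intro i _
      rw [Finset.mul_sum]
      apply Finset.sum_congr rfl; intro l _; ring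
    · rw [Finset.sum_comm]
      apply Finset.sum_congr rfl; intro l _
      rw [Finset.mul_sum]
      apply Finset.sum_congr rfl; intro i _; ring
  have hs1 : ∑ i, x i ^ 2 * ∑ l, |A i l| ≤ ∑ i, x i ^ 2 * N := by
    apply Finset.sum_le_sum; intro i _
    have hrow : ∑ l, |A i l| = ∑ l, |A l i| := by
      apply Finset.sum_congr rfl; intro l _; rw [habs i l]
    rw [hrow]
    exact mul_le_mul_of_nonneg_left (hN i) (sq_nonneg _)
  have hs2 : ∑ l, x l ^ 2 * ∑ i, |A i l| ≤ ∑ l, x l ^ 2 * N :=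
    Finset.sum_le_sum fun l _ => mul_le_mul_of_nonneg_left (hN l) (sq_nonneg _)
  have hdot : ∑ i, x i ^ 2 * N = N * (x ⬝ᵥ x) := by
    rw [← Finset.sum_mul]
    simp [dotProduct, sq, mul_comm]
  have h2' : 2 * (x ⬝ᵥ A *ᵥ x) = ∑ i, ∑ l, 2 * (x i * A i l * x l) := by
    rw [h1, Finset.mul_sum]
    apply Finset.sum_congr rfl; intro i _
    rw [Finset.mul_sum]
  linarith [h2, hsplit.le, hsplit.ge, hs1, hs2, hdot.le, hdot.ge, h2'.le, h2'.ge]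

/-- If `PᵀVP = V′` with `V` positive definite, symmetric and unimodular and `V′`
symmetric and unimodular, then every column `p` of `P` satisfies
`‖p‖₂ ≤ N₁(V⁻¹) · R`, where `R` is the maximum diagonal entry of `V′`. -/
theorem column_norm_bound_of_congruence (m : ℕ) (hm : 1 ≤ m)
    (V V' : Matrix (Fin m) (Fin m) ℤ) (hsymm : V.IsSymm) (hsymm' : V'.IsSymm)
    (hdet : V.det = 1 ∨ V.det = -1) (hdet' : V'.det = 1 ∨ V'.det = -1)
    (hpos : (V.map ((↑) : ℤ → ℝ)).PosDef)
    (P : Matrix (Fin m) (Fin m) ℤ) (hP : Pᵀ * V * P = V') :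
    ∀ j : Fin m,
      Real.sqrt (∑ i : Fin m, ((P i j : ℝ)) ^ 2) ≤
        (((Finset.univ.sup' (Finset.univ_nonempty_iff.mpr ⟨⟨0, hm⟩⟩)
              (fun l : Fin m => ∑ i : Fin m, |V⁻¹ i l|)) *
            (Finset.univ.sup' (Finset.univ_nonempty_iff.mpr ⟨⟨0, hm⟩⟩)
              (fun i : Fin m => V' i i)) : ℤ) : ℝ) := by
  have hne : (Finset.univ : Finset (Fin m)).Nonempty := Finset.univ_nonempty_iff.mpr ⟨⟨0, hm⟩⟩
  set N : ℤ := Finset.univ.sup' hne (fun l : Fin m => ∑ i : Fin m, |V⁻¹ i l|) with hNdef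
  set R : ℤ := Finset.univ.sup' hne (fun i : Fin m => V' i i) with hRdef
  -- basic unimodularity facts
  have hVunit : IsUnit V.det := by
    rcases hdet with h | h <;> simp [h]
  have hVV : V * V⁻¹ = 1 := mul_nonsing_inv V hVunit
  have hVV' : V⁻¹ * V = 1 := nonsing_inv_mul V hVunit
  -- real versions
  set Vr : Matrix (Fin m) (Fin m) ℝ := V.map ((↑) : ℤ → ℝ) with hVr
  set W : Matrix (Fin m) (Fin m) ℝ := (V⁻¹).map ((↑) : ℤ → ℝ) with hW
  have hmap : ∀ (A B : Matrix (Fin m) (Fin m) ℤ),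
      (A * B).map ((↑) : ℤ → ℝ) = A.map ((↑) : ℤ → ℝ) * B.map ((↑) : ℤ → ℝ) := by
    intro A B
    exact Matrix.map_mul (f := Int.castRingHom ℝ)
  have hVrW : Vr * W = 1 := by
    rw [hVr, hW, ← hmap, hVV]; simp
  have hWsymm : Wᵀ = W := by
    rw [hW, ← Matrix.transpose_map]
    congr 1
    rw [transpose_nonsing_inv, hsymm.eq]
  -- P has nonzero determinant
  have hdetP : P.det ≠ 0 := by
    intro h0
    have : V'.det = 0 := by
      rw [← hP, Matrix.det_mul, Matrix.det_mul, h0, mul_zero]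
    rcases hdet' with h | h <;> omega
  -- N ≥ 1
  have hdetVinv : (V⁻¹).det ≠ 0 := by
    have h := congrArg Matrix.det hVV'
    rw [det_mul, det_one] at h
    intro h0
    rw [h0, zero_mul] at h
    exact absurd h (by norm_num)
  have hNle : ∀ l : Fin m, (∑ i : Fin m, |V⁻¹ i l|) ≤ N := fun l =>
    Finset.le_sup' (fun l : Fin m => ∑ i : Fin m, |V⁻¹ i l|) (Finset.mem_univ l)
  have hRle : ∀ i : Fin m, V' i i ≤ R := fun i =>
    Finset.le_sup' (fun i : Fin m => V' i i) (Finset.mem_univ i)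
  have hN1 : 1 ≤ N := by
    set l₀ : Fin m := ⟨0, hm⟩
    have hcol : ∃ i, V⁻¹ i l₀ ≠ 0 := by
      by_contra hc
      push_neg at hc
      exact hdetVinv (det_eq_zero_of_column_eq_zero l₀ hc)
    obtain ⟨i₀, hi₀⟩ := hcol
    have h1 : (1 : ℤ) ≤ ∑ i : Fin m, |V⁻¹ i l₀| := by
      have : 1 ≤ |V⁻¹ i₀ l₀| := by
        rcases (abs_pos.mpr hi₀) with h
        omega
      calc (1 : ℤ) ≤ |V⁻¹ i₀ l₀| := this
      _ ≤ ∑ i : Fin m, |V⁻¹ i l₀| :=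
        Finset.single_le_sum (f := fun i => |V⁻¹ i l₀|) (fun i _ => abs_nonneg _)
          (Finset.mem_univ i₀)
    exact h1.trans (hNle l₀)
  intro j
  -- the column p
  set p : Fin m → ℝ := fun i => (P i j : ℝ) with hp
  -- quadratic value
  have hquad : p ⬝ᵥ Vr *ᵥ p = ((V' j j : ℤ) : ℝ) := by
    rw [← hP]
    simp only [dotProduct, mulVec, hVr, hp, Matrix.mul_apply, Matrix.transpose_apply,
      Matrix.map_apply]
    push_cast
    simp only [Finset.mul_sum, Finset.sum_mul]
    rw [Finset.sum_comm]
    apply Finset.sum_congr rfl; intro k _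
    apply Finset.sum_congr rfl; intro i _
    ring
  -- V' j j ≥ 1 (p is nonzero and Vr is posdef)
  have hpne : p ≠ 0 := by
    intro h0
    apply hdetP
    apply det_eq_zero_of_column_eq_zero j
    intro i
    have : (P i j : ℝ) = 0 := congrFun h0 i
    exact_mod_cast this
  have hVjj_pos : (0 : ℝ) < ((V' j j : ℤ) : ℝ) := by
    rw [← hquad]
    have := hpos.dotProduct_mulVec_pos hpne
    simpa using this
  have hVjj1 : 1 ≤ V' j j := by
    have : (0 : ℤ) < V' j j := by exact_mod_cast hVjj_pos
    omega
  have hR1 : 1 ≤ R := hVjj1.trans (hRle j)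
  have hVjjR : V' j j ≤ R := hRle j
  -- column sums of W are bounded by N
  have hNcol : ∀ l, ∑ i, |W i l| ≤ (N : ℝ) := by
    intro l
    have h1 : ∑ i : Fin m, |V⁻¹ i l| ≤ N := hNle l
    have : (∑ i : Fin m, (|V⁻¹ i l| : ℝ)) ≤ (N : ℝ) := by exact_mod_cast h1
    simpa [hW, Matrix.map_apply] using this
  -- S := ‖p‖²
  set S : ℝ := p ⬝ᵥ p with hS
  have hSsum : S = ∑ i : Fin m, (P i j : ℝ) ^ 2 := by
    simp [hS, dotProduct, hp, sq]
  have hSnonneg : 0 ≤ S := by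
    rw [hSsum]
    positivity
  -- key inequality : S ≤ N * (V' j j)
  have hWp : Vr *ᵥ (W *ᵥ p) = p := by
    rw [mulVec_mulVec, hVrW, one_mulVec]
  have hCS := aux_cs Vr hpos.posSemidef p (W *ᵥ p)
  rw [hWp] at hCS
  have hqq : (W *ᵥ p) ⬝ᵥ p = p ⬝ᵥ W *ᵥ p := dotProduct_comm _ _
  rw [hqq] at hCS
  -- p ⬝ W p ≤ N * S
  have hWbound : p ⬝ᵥ W *ᵥ p ≤ (N : ℝ) * S := aux_colbound W hWsymm (N : ℝ) hNcol p
  have hSsq : S ^ 2 ≤ ((V' j j : ℤ) : ℝ) * ((N : ℝ) * S) := by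
    calc S ^ 2 = (p ⬝ᵥ p) ^ 2 := by rw [hS]
    _ ≤ (p ⬝ᵥ Vr *ᵥ p) * (p ⬝ᵥ W *ᵥ p) := hCS
    _ ≤ ((V' j j : ℤ) : ℝ) * ((N : ℝ) * S) := by
        rw [hquad]
        exact mul_le_mul_of_nonneg_left hWbound hVjj_pos.le
  have hSle : S ≤ (N : ℝ) * ((V' j j : ℤ) : ℝ) := by
    rcases eq_or_lt_of_le hSnonneg with h0 | h0
    · rw [← h0]
      positivity
    · nlinarith [hSsq, h0]
  have hNR : S ≤ ((N * R : ℤ) : ℝ) := by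
    have hNpos : (0 : ℝ) ≤ (N : ℝ) := by exact_mod_cast (by omega : (0:ℤ) ≤ N)
    have h1 : (N : ℝ) * ((V' j j : ℤ) : ℝ) ≤ (N : ℝ) * (R : ℝ) := by
      apply mul_le_mul_of_nonneg_left _ hNpos
      exact_mod_cast hVjjR
    push_cast
    linarith [hSle, h1]
  have hNR1 : (1 : ℝ) ≤ ((N * R : ℤ) : ℝ) := by
    have : (1 : ℤ) ≤ N * R := by nlinarith [hN1, hR1]
    exact_mod_cast this
  calc Real.sqrt (∑ i : Fin m, ((P i j : ℝ)) ^ 2) = Real.sqrt S := by rw [hSsum]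
  _ ≤ Real.sqrt ((N * R : ℤ) : ℝ) := Real.sqrt_le_sqrt hNR
  _ ≤ ((N * R : ℤ) : ℝ) := by
      nlinarith [Real.sq_sqrt (by linarith : (0:ℝ) ≤ ((N * R : ℤ) : ℝ)),
        Real.sqrt_nonneg (((N * R : ℤ) : ℝ)),
        sq_nonneg (Real.sqrt (((N * R : ℤ) : ℝ)) - 1), hNR1]
end

section
/- For every natural number m, the predicate on m×m integer matrices V asserting 'V is symmetric and positive definite (i.e., xᵀVx > 0 for every nonzero real vector x)' is decidable in the computability-theoretic sense: it is a ComputablePred with respect to the canonical encoding of integer matrices. In particular, there exists an algorithm that takes as input an integral symmetric matrix and outputs whether or not it is positive definite. -/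
open Matrix

namespace IntPR

lemma encInt (z : ℤ) :
    Encodable.encode z = if 0 ≤ z then 2 * z.toNat else 2 * (-z).toNat - 1 := by
  rcases z with n | n
  · show 2 * n = _
    simp
  · show 2 * n + 1 = _
    rw [if_neg (by simp [Int.negSucc_eq]; omega)]
    simp [Int.negSucc_eq]
    omega

lemma prim_toNat : Primrec Int.toNat := by
  have h : Primrec fun z : ℤ =>
      if Encodable.encode z % 2 = 0 then Encodable.encode z / 2 else 0 :=
    Primrec.ite
      (Primrec.eq.comp (Primrec.nat_mod.comp Primrec.encode (Primrec.const 2))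
        (Primrec.const 0))
      (Primrec.nat_div.comp Primrec.encode (Primrec.const 2)) (Primrec.const 0)
  exact h.of_eq fun z => by have e := encInt z; split_ifs at e ⊢ <;> omega

lemma prim_negToNat : Primrec fun z : ℤ => (-z).toNat := by
  have h : Primrec fun z : ℤ =>
      if Encodable.encode z % 2 = 0 then 0 else (Encodable.encode z + 1) / 2 :=
    Primrec.ite
      (Primrec.eq.comp (Primrec.nat_mod.comp Primrec.encode (Primrec.const 2))
        (Primrec.const 0))
      (Primrec.const 0)
      (Primrec.nat_div.comp (Primrec.succ.comp Primrec.encode) (Primrec.const 2))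
  exact h.of_eq fun z => by have e := encInt z; split_ifs at e ⊢ <;> omega

lemma prim_mk : Primrec₂ fun p q : ℕ => (p : ℤ) - q := by
  have h : Primrec fun p : ℕ × ℕ =>
      if p.2 ≤ p.1 then 2 * (p.1 - p.2) else 2 * (p.2 - p.1) - 1 :=
    Primrec.ite (Primrec.nat_le.comp Primrec.snd Primrec.fst)
      (Primrec.nat_mul.comp (Primrec.const 2) (Primrec.nat_sub.comp Primrec.fst Primrec.snd))
      (Primrec.nat_sub.comp
        (Primrec.nat_mul.comp (Primrec.const 2) (Primrec.nat_sub.comp Primrec.snd Primrec.fst))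
        (Primrec.const 1))
  refine Primrec.encode_iff.1 (h.of_eq fun p => ?_)
  show _ = Encodable.encode ((p.1 : ℤ) - p.2)
  have e := encInt ((p.1 : ℤ) - p.2)
  split_ifs at e ⊢ <;> omega

lemma prim_add : Primrec₂ ((· + ·) : ℤ → ℤ → ℤ) := by
  have h : Primrec fun p : ℤ × ℤ =>
      ((p.1.toNat + p.2.toNat : ℕ) : ℤ) - ((-p.1).toNat + (-p.2).toNat : ℕ) :=
    prim_mk.comp
      (Primrec.nat_add.comp (prim_toNat.comp Primrec.fst) (prim_toNat.comp Primrec.snd))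
      (Primrec.nat_add.comp (prim_negToNat.comp Primrec.fst) (prim_negToNat.comp Primrec.snd))
  exact h.of_eq fun p => by push_cast; omega

lemma prim_neg : Primrec ((- ·) : ℤ → ℤ) := by
  have h : Primrec fun z : ℤ => (((-z).toNat : ℕ) : ℤ) - (z.toNat : ℕ) :=
    prim_mk.comp prim_negToNat prim_toNat
  exact h.of_eq fun z => by omega

lemma prim_mul : Primrec₂ ((· * ·) : ℤ → ℤ → ℤ) := by
  have h : Primrec fun p : ℤ × ℤ =>
      ((p.1.toNat * p.2.toNat + (-p.1).toNat * (-p.2).toNat : ℕ) : ℤ) -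
        (p.1.toNat * (-p.2).toNat + (-p.1).toNat * p.2.toNat : ℕ) := by
    have pa := prim_toNat.comp (Primrec.fst (α := ℤ) (β := ℤ))
    have na := prim_negToNat.comp (Primrec.fst (α := ℤ) (β := ℤ))
    have pb := prim_toNat.comp (Primrec.snd (α := ℤ) (β := ℤ))
    have nb := prim_negToNat.comp (Primrec.snd (α := ℤ) (β := ℤ))
    exact prim_mk.comp
      (Primrec.nat_add.comp (Primrec.nat_mul.comp pa pb) (Primrec.nat_mul.comp na nb))
      (Primrec.nat_add.comp (Primrec.nat_mul.comp pa nb) (Primrec.nat_mul.comp na pb))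
  refine h.of_eq fun p => ?_
  have ha : (p.1.toNat : ℤ) - ((-p.1).toNat : ℤ) = p.1 := by omega
  have hb : (p.2.toNat : ℤ) - ((-p.2).toNat : ℤ) = p.2 := by omega
  push_cast
  linear_combination ((p.2.toNat : ℤ) - ((-p.2).toNat : ℤ)) * ha + p.1 * hb

lemma prim_lt : PrimrecRel ((· < ·) : ℤ → ℤ → Prop) := by
  have h : PrimrecPred fun p : ℤ × ℤ =>
      p.1.toNat + (-p.2).toNat < p.2.toNat + (-p.1).toNat :=
    Primrec.nat_lt.comp
      (Primrec.nat_add.comp (prim_toNat.comp Primrec.fst) (prim_negToNat.comp Primrec.snd))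
      (Primrec.nat_add.comp (prim_toNat.comp Primrec.snd) (prim_negToNat.comp Primrec.fst))
  exact h.of_eq fun p => by omega

end IntPR

namespace IntPR

open Primrec in
lemma prim_restrict {m k l : ℕ} (f : Fin k → Fin m) (g : Fin l → Fin m) :
    Primrec fun V : Fin m → Fin m → ℤ => (fun a b => V (f a) (g b)) := by
  apply Primrec.fin_curry.2
  apply Primrec.fin_curry.2
  exact Primrec.fin_app.comp
    (Primrec.fin_app.comp (Primrec.fst.comp Primrec.fst)
      ((Primrec.dom_finite f).comp (Primrec.snd.comp Primrec.fst)))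
    ((Primrec.dom_finite g).comp Primrec.snd)

lemma prim_transpose {m : ℕ} :
    Primrec fun V : Fin m → Fin m → ℤ => (fun a b => V b a) := by
  apply Primrec.fin_curry.2
  apply Primrec.fin_curry.2
  exact Primrec.fin_app.comp
    (Primrec.fin_app.comp (Primrec.fst.comp Primrec.fst) Primrec.snd)
    (Primrec.snd.comp Primrec.fst)

lemma prim_entry {k : ℕ} (i j : Fin k) :
    Primrec fun M : Fin k → Fin k → ℤ => M i j :=
  Primrec.fin_app.comp (Primrec.fin_app.comp Primrec.id (Primrec.const i)) (Primrec.const j)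

lemma prim_det : ∀ k : ℕ, Primrec fun M : Fin k → Fin k → ℤ => (Matrix.of M).det
  | 0 => (Primrec.const 1).of_eq fun M => by simp [Matrix.det_fin_zero]
  | (k + 1) => by
    have IH := prim_det k
    have hterm : ∀ j : Fin (k + 1), Primrec fun M : Fin (k + 1) → Fin (k + 1) → ℤ =>
        (-1 : ℤ) ^ (j : ℕ) * M 0 j *
          (Matrix.of fun a b : Fin k => M (Fin.succ a) (j.succAbove b)).det := fun j =>
      prim_mul.comp
        (prim_mul.comp (Primrec.const _) (prim_entry 0 j))
        (IH.comp (prim_restrict Fin.succ j.succAbove))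
    have h : Primrec fun M : Fin (k + 1) → Fin (k + 1) → ℤ =>
        (List.ofFn fun j : Fin (k + 1) =>
          (-1 : ℤ) ^ (j : ℕ) * M 0 j *
            (Matrix.of fun a b : Fin k => M (Fin.succ a) (j.succAbove b)).det).foldr
          (fun b s => b + s) 0 :=
      Primrec.list_foldr (Primrec.list_ofFn hterm) (Primrec.const 0)
        (prim_add.comp (Primrec.fst.comp Primrec.snd) (Primrec.snd.comp Primrec.snd)).to₂
    refine h.of_eq fun M => ?_
    rw [show ∀ l : List ℤ, l.foldr (fun b s => b + s) 0 = l.sum from fun l => rfl,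
      List.sum_ofFn, Matrix.det_succ_row_zero]
    rfl

end IntPR

namespace SylvesterAux

open Matrix

lemma posDef_conj {ι κ : Type*} [Fintype ι] [DecidableEq ι] [Fintype κ] [DecidableEq κ]
    {A : Matrix ι ι ℝ} (hA : A.PosDef)
    (B : Matrix ι κ ℝ) (hB : ∀ x, B *ᵥ x = 0 → x = 0) :
    (Bᴴ * A * B).PosDef := by
  refine Matrix.PosDef.of_dotProduct_mulVec_pos ?_ fun x hx => ?_
  · show (Bᴴ * A * B)ᴴ = _
    have hAt : Aᵀ = A := by
      ext i j
      have := congrFun (congrFun hA.1 i) j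
      simpa [Matrix.conjTranspose_apply] using this
    simp [Matrix.conjTranspose_mul, Matrix.mul_assoc, hA.1.eq, hAt]
  · have h1 : star x ⬝ᵥ (Bᴴ * A * B) *ᵥ x = star (B *ᵥ x) ⬝ᵥ A *ᵥ (B *ᵥ x) := by
      rw [← Matrix.mulVec_mulVec, ← Matrix.mulVec_mulVec, Matrix.dotProduct_mulVec,
        ← Matrix.star_mulVec]
    rw [h1]
    exact hA.dotProduct_mulVec_pos fun h => hx (hB x h)

lemma posDef_submatrix {ι κ : Type*} [Fintype ι] [DecidableEq ι] [Fintype κ] [DecidableEq κ]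
    {A : Matrix ι ι ℝ} (hA : A.PosDef)
    {e : κ → ι} (he : Function.Injective e) : (A.submatrix e e).PosDef := by
  classical
  rw [(by simp : A = 1 * A * 1), Matrix.submatrix_mul (he₂ := Function.bijective_id),
    Matrix.submatrix_mul (he₂ := Function.bijective_id), Matrix.submatrix_id_id]
  have key := posDef_conj hA ((1 : Matrix ι ι ℝ).submatrix id e) ?_
  · simpa only [Matrix.conjTranspose_submatrix, Matrix.conjTranspose_one] using key
  · intro x hx
    funext i
    have h := congrFun hx (e i)
    simpa [Matrix.mulVec, dotProduct, Matrix.submatrix_apply, Matrix.one_apply,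
      he.eq_iff, Finset.sum_ite_eq] using h

lemma posDef_one_dim {S : Matrix (Fin 1) (Fin 1) ℝ} (h : 0 < S 0 0) : S.PosDef := by
  refine Matrix.PosDef.of_dotProduct_mulVec_pos ?_ ?_
  · ext i j
    fin_cases i <;> fin_cases j
    simp [Matrix.conjTranspose_apply]
  · intro x hx
    have hx0 : x 0 ≠ 0 := fun h0 => hx (funext fun i => by fin_cases i; exact h0)
    have hq : star x ⬝ᵥ S *ᵥ x = S 0 0 * (x 0 * x 0) := by
      simp [dotProduct, Matrix.mulVec, Fin.sum_univ_one]
      ring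
    rw [hq]
    exact mul_pos h (mul_self_pos.2 hx0)

lemma posDef_of_posSemidef_isUnit_det {ι : Type*} [Fintype ι] [DecidableEq ι]
    {M : Matrix ι ι ℝ}
    (h : M.PosSemidef) (hd : IsUnit M.det) : M.PosDef := by
  refine Matrix.PosDef.of_dotProduct_mulVec_pos h.1 fun x hx => lt_of_le_of_ne (h.dotProduct_mulVec_nonneg x) fun h0 => hx ?_
  have hker := (h.dotProduct_mulVec_zero_iff x).1 h0.symm
  have hinj := Matrix.mulVec_injective_iff_isUnit.2 ((Matrix.isUnit_iff_isUnit_det M).2 hd)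
  exact hinj (by simpa using hker)

lemma posDef_of_minors : ∀ {n : ℕ} {A : Matrix (Fin n) (Fin n) ℝ}, A.IsHermitian →
    (∀ k : Fin n, 0 < (A.submatrix (Fin.castLE k.isLt) (Fin.castLE k.isLt)).det) →
    A.PosDef := by
  intro n
  induction n with
  | zero => exact fun {A} hA _ => ⟨hA, fun x hx => absurd (Subsingleton.elim x 0) hx⟩
  | succ n IH =>
    intro A hA hmin
    set B := A.submatrix (Fin.castLE (Nat.le_succ n)) (Fin.castLE (Nat.le_succ n)) with hBdef
    have hB : B.PosDef := by
      apply IH (hA.submatrix _)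
      intro k
      have h := hmin ⟨k.val, Nat.lt_succ_of_lt k.isLt⟩
      have hEq : B.submatrix (Fin.castLE k.isLt) (Fin.castLE k.isLt)
          = A.submatrix (Fin.castLE (Fin.mk k.val (Nat.lt_succ_of_lt k.isLt)).isLt)
            (Fin.castLE (Fin.mk k.val (Nat.lt_succ_of_lt k.isLt)).isLt) := by
        rw [hBdef, Matrix.submatrix_submatrix]
        congr 1 <;> (funext a; apply Fin.ext; simp [Fin.castLE])
      rw [hEq]
      exact h
    haveI : Invertible B := B.invertibleOfIsUnitDet hB.det_pos.ne'.isUnit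
    have hdetA : 0 < A.det := by
      have h := hmin ⟨n, n.lt_succ_self⟩
      have hEq : A.submatrix (Fin.castLE (Fin.mk n n.lt_succ_self).isLt)
          (Fin.castLE (Fin.mk n n.lt_succ_self).isLt) = A := by
        have : ∀ a : Fin (n+1), Fin.castLE (Fin.mk n n.lt_succ_self).isLt a = a := by
          intro a; apply Fin.ext; simp [Fin.castLE]
        calc A.submatrix _ _ = A.submatrix id id := by
              congr 1 <;> funext a <;> exact this a
          _ = A := Matrix.submatrix_id_id A
      rwa [hEq] at h
    set e : Fin n ⊕ Fin 1 ≃ Fin (n + 1) := finSumFinEquiv with hedef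
    set M := A.submatrix e e with hMdef
    have hMh : M.IsHermitian := hA.submatrix e
    have h11 : M.toBlocks₁₁ = B := by
      ext i j
      show A (e (Sum.inl i)) (e (Sum.inl j)) = A _ _
      congr 1 <;> (apply Fin.ext; simp [hedef, Fin.castLE])
    have h21 : M.toBlocks₂₁ = (M.toBlocks₁₂)ᴴ := by
      ext i j
      simp only [Matrix.toBlocks₂₁, Matrix.toBlocks₁₂, Matrix.conjTranspose_apply,
        Matrix.of_apply]
      exact (hMh.apply _ _).symm
    have hblocks : M = Matrix.fromBlocks B M.toBlocks₁₂ (M.toBlocks₁₂)ᴴ M.toBlocks₂₂ := by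
      conv_lhs => rw [← Matrix.fromBlocks_toBlocks M]
      rw [h11, h21]
    have hdetM : M.det = A.det := Matrix.det_submatrix_equiv_self e A
    have hdeteq : A.det = B.det *
        (M.toBlocks₂₂ - (M.toBlocks₁₂)ᴴ * ⅟B * M.toBlocks₁₂).det := by
      rw [← hdetM]
      conv_lhs => rw [hblocks]
      exact Matrix.det_fromBlocks₁₁ _ _ _ _
    have hSdet : 0 < (M.toBlocks₂₂ - (M.toBlocks₁₂)ᴴ * B⁻¹ * M.toBlocks₁₂).det := by
      rw [← Matrix.invOf_eq_nonsing_inv]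
      nlinarith [hB.det_pos, hdetA, hdeteq]
    have hS : (M.toBlocks₂₂ - (M.toBlocks₁₂)ᴴ * B⁻¹ * M.toBlocks₁₂).PosDef := by
      apply posDef_one_dim
      rwa [Matrix.det_fin_one] at hSdet
    have hMpsd : M.PosSemidef := by
      rw [hblocks]
      exact (Matrix.PosDef.fromBlocks₁₁ _ _ hB).2 hS.posSemidef
    have hMpd : M.PosDef :=
      posDef_of_posSemidef_isUnit_det hMpsd
        (show IsUnit M.det by rw [hdetM]; exact hdetA.ne'.isUnit)
    have hback : M.submatrix e.symm e.symm = A := by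
      rw [hMdef, Matrix.submatrix_submatrix]
      simp
    have := posDef_submatrix hMpd e.symm.injective
    rwa [hback] at this

lemma posDef_iff_minors {n : ℕ} {A : Matrix (Fin n) (Fin n) ℝ} (hA : A.IsHermitian) :
    A.PosDef ↔
      ∀ k : Fin n, 0 < (A.submatrix (Fin.castLE k.isLt) (Fin.castLE k.isLt)).det :=
  ⟨fun h k => (posDef_submatrix h (Fin.castLE_injective _)).det_pos,
    posDef_of_minors hA⟩

end SylvesterAux

open Matrix

lemma foldr_and_ofFn : ∀ {n : ℕ} (g : Fin n → Bool),
    ((List.ofFn g).foldr (fun b s => b && s) true = true ↔ ∀ i, g i = true)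
  | 0, g => by simp [List.ofFn_zero]
  | (n + 1), g => by
    simp only [List.ofFn_succ, List.foldr_cons, Bool.and_eq_true, Fin.forall_fin_succ]
    rw [foldr_and_ofFn (fun i => g i.succ)]

lemma minor_cast {m : ℕ} (V : Fin m → Fin m → ℤ) (k : Fin m) :
    (((Matrix.of V).map ((↑) : ℤ → ℝ)).submatrix (Fin.castLE k.isLt)
        (Fin.castLE k.isLt)).det =
      (((Matrix.of fun a b : Fin (k.val + 1) =>
        V (Fin.castLE k.isLt a) (Fin.castLE k.isLt b)).det : ℤ) : ℝ) := by
  have h1 : ((Matrix.of V).map ((↑) : ℤ → ℝ)).submatrix (Fin.castLE k.isLt)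
      (Fin.castLE k.isLt) = ((Matrix.of fun a b : Fin (k.val + 1) =>
        V (Fin.castLE k.isLt a) (Fin.castLE k.isLt b)).map ((↑) : ℤ → ℝ)) := rfl
  rw [h1]
  have := RingHom.map_det (Int.castRingHom ℝ)
    (Matrix.of fun a b : Fin (k.val + 1) => V (Fin.castLE k.isLt a) (Fin.castLE k.isLt b))
  simpa using this.symm

/-- The predicate "an integer matrix is symmetric and positive definite" is
computably decidable. -/
theorem computablePred_posDef (m : ℕ) :
    ComputablePred fun V : Fin m → Fin m → ℤ =>
      (Matrix.of V).IsSymm ∧ ((Matrix.of V).map ((↑) : ℤ → ℝ)).PosDef := by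
  rw [ComputablePred.computable_iff]
  refine ⟨fun V => (decide ((fun a b => V b a) = V)) &&
    (List.ofFn fun k : Fin m => decide
      (0 < (Matrix.of fun a b : Fin (k.val + 1) =>
        V (Fin.castLE k.isLt a) (Fin.castLE k.isLt b)).det)).foldr
      (fun b s => b && s) true, ?_, ?_⟩
  · -- computability
    apply Primrec.to_comp
    have h1 : Primrec fun V : Fin m → Fin m → ℤ => decide ((fun a b => V b a) = V) :=
      PrimrecPred.decide (Primrec.eq.comp IntPR.prim_transpose Primrec.id)
    have h2 : Primrec fun V : Fin m → Fin m → ℤ =>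
        (List.ofFn fun k : Fin m => decide
          (0 < (Matrix.of fun a b : Fin (k.val + 1) =>
            V (Fin.castLE k.isLt a) (Fin.castLE k.isLt b)).det)).foldr
          (fun b s => b && s) true := by
      have hf : Primrec fun V : Fin m → Fin m → ℤ =>
          List.ofFn fun k : Fin m => decide
            (0 < (Matrix.of fun a b : Fin (k.val + 1) =>
              V (Fin.castLE k.isLt a) (Fin.castLE k.isLt b)).det) := by
        apply Primrec.list_ofFn
        intro k
        exact PrimrecPred.decide (IntPR.prim_lt.comp (Primrec.const 0)
          ((IntPR.prim_det _).comp
            (IntPR.prim_restrict (Fin.castLE k.isLt) (Fin.castLE k.isLt))))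
      have hh : Primrec₂ fun (_ : Fin m → Fin m → ℤ) (p : Bool × Bool) => p.1 && p.2 :=
        ((Primrec.dom_finite fun p : Bool × Bool => p.1 && p.2).comp Primrec.snd).to₂
      exact (Primrec.list_foldr hf (Primrec.const true) hh).of_eq fun V => rfl
    have := Primrec.cond h1 h2 (Primrec.const false)
    refine this.of_eq fun V => ?_
    cases hb : decide ((fun a b => V b a) = V) <;> simp
  · -- correctness
    funext V
    apply propext
    rw [Bool.and_eq_true, foldr_and_ofFn, decide_eq_true_eq]
    constructor
    · rintro ⟨hs, hp⟩
      have hsym : (fun a b => V b a) = V := hs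
      refine ⟨hsym, fun k => ?_⟩
      have hherm : ((Matrix.of V).map ((↑) : ℤ → ℝ)).IsHermitian := hp.1
      have h := (SylvesterAux.posDef_iff_minors hherm).1 hp k
      rw [minor_cast] at h
      rw [decide_eq_true_eq]
      exact_mod_cast h
    · rintro ⟨hs, hp⟩
      have hsym : (Matrix.of V).IsSymm := hs
      have hherm : ((Matrix.of V).map ((↑) : ℤ → ℝ)).IsHermitian := by
        ext i j
        simp only [Matrix.conjTranspose_apply, Matrix.map_apply, Matrix.of_apply, star_trivial]
        exact_mod_cast (congrFun (congrFun hs j) i).symm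
      refine ⟨hsym, (SylvesterAux.posDef_iff_minors hherm).2 fun k => ?_⟩
      rw [minor_cast]
      have := hp k
      rw [decide_eq_true_eq] at this
      exact_mod_cast this
end

section
/- For all natural numbers m and n, the predicate on pairs (A, b), where A is an m×n integer matrix and b ∈ ℤ^m, asserting 'there exists x ∈ ℤ^n with A·x = b (matrix–vector multiplication)' is decidable in the computability-theoretic sense: it is a ComputablePred with respect to the canonical encoding. That is, there exists an algorithm that takes as input an integer matrix A and an integer vector b and decides whether or not the linear system Ax = b has an integral solution. -/
open Matrix

namespace ILS

open Primrec Sum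

/-! ### Primitive recursion for integer arithmetic -/

private def itn (z : ℤ) : ℕ ⊕ ℕ := Equiv.intEquivNatSumNat z
private def nti (s : ℕ ⊕ ℕ) : ℤ := Equiv.intEquivNatSumNat.symm s

private lemma nti_itn (z : ℤ) : nti (itn z) = z := Equiv.symm_apply_apply _ z

private lemma nti_inl (a : ℕ) : nti (Sum.inl a) = (a : ℤ) := rfl
private lemma nti_inr (b : ℕ) : nti (Sum.inr b) = -(b + 1 : ℤ) := Int.negSucc_eq b

private lemma encode_itn (z : ℤ) : Encodable.encode (itn z) = Encodable.encode z := by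
  cases z <;> rfl

private lemma encode_nti (s : ℕ ⊕ ℕ) : Encodable.encode (nti s) = Encodable.encode s := by
  cases s <;> rfl

private lemma primrec_itn : Primrec itn :=
  Primrec.encode_iff.mp (Primrec.encode.of_eq fun z => (encode_itn z).symm)

private lemma primrec_nti : Primrec nti :=
  Primrec.encode_iff.mp (Primrec.encode.of_eq fun s => (encode_nti s).symm)

private def sadd : ℕ ⊕ ℕ → ℕ ⊕ ℕ → ℕ ⊕ ℕ
  | Sum.inl a, Sum.inl c => Sum.inl (a + c)
  | Sum.inl a, Sum.inr d => if d < a then Sum.inl (a - d - 1) else Sum.inr (d - a)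
  | Sum.inr b, Sum.inl c => if b < c then Sum.inl (c - b - 1) else Sum.inr (b - c)
  | Sum.inr b, Sum.inr d => Sum.inr (b + d + 1)

private def smul : ℕ ⊕ ℕ → ℕ ⊕ ℕ → ℕ ⊕ ℕ
  | Sum.inl a, Sum.inl c => Sum.inl (a * c)
  | Sum.inl a, Sum.inr d => if a = 0 then Sum.inl 0 else Sum.inr (a * (d + 1) - 1)
  | Sum.inr b, Sum.inl c => if c = 0 then Sum.inl 0 else Sum.inr (c * (b + 1) - 1)
  | Sum.inr b, Sum.inr d => Sum.inl ((b + 1) * (d + 1))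

private def sneg : ℕ ⊕ ℕ → ℕ ⊕ ℕ
  | Sum.inl a => if a = 0 then Sum.inl 0 else Sum.inr (a - 1)
  | Sum.inr b => Sum.inl (b + 1)

private lemma nti_sadd (s t : ℕ ⊕ ℕ) : nti (sadd s t) = nti s + nti t := by
  rcases s with a | b <;> rcases t with c | d <;>
    simp only [sadd] <;> try split_ifs <;> try simp only [nti_inl, nti_inr]
  all_goals (try simp only [nti_inl, nti_inr]) <;> push_cast <;> omega

private lemma nti_smul (s t : ℕ ⊕ ℕ) : nti (smul s t) = nti s * nti t := by
  rcases s with a | b <;> rcases t with c | d <;> simp only [smul]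
  · simp only [nti_inl]; push_cast; ring
  · split_ifs with h
    · subst h; simp [nti_inl]
    · have h1 : 1 ≤ a * (d + 1) := Nat.one_le_iff_ne_zero.2 (by positivity)
      simp only [nti_inl, nti_inr]
      rw [Nat.cast_sub h1]; push_cast; ring
  · split_ifs with h
    · subst h; simp [nti_inl]
    · have h1 : 1 ≤ c * (b + 1) := Nat.one_le_iff_ne_zero.2 (by positivity)
      simp only [nti_inl, nti_inr]
      rw [Nat.cast_sub h1]; push_cast; ring
  · simp only [nti_inl, nti_inr]; push_cast; ring

private lemma nti_sneg (s : ℕ ⊕ ℕ) : nti (sneg s) = -nti s := by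
  rcases s with a | b <;> simp only [sneg]
  · split_ifs with h
    · subst h; simp [nti_inl]
    · simp only [nti_inl, nti_inr]; omega
  · simp only [nti_inl, nti_inr]; push_cast; omega

private lemma primrec_sadd : Primrec₂ sadd := by
  have b11 : Primrec fun x : ((ℕ ⊕ ℕ) × (ℕ ⊕ ℕ)) × ℕ × ℕ => (Sum.inl (x.2.1 + x.2.2) : ℕ ⊕ ℕ) :=
    sumInl.comp (nat_add.comp (fst.comp snd) (snd.comp snd))
  have i1 : Primrec₂ fun (q : (ℕ ⊕ ℕ) × (ℕ ⊕ ℕ)) (a : ℕ) => sadd (Sum.inl a) q.2 := by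
    have := Primrec.sumCasesOn
      (f := fun x : ((ℕ ⊕ ℕ) × (ℕ ⊕ ℕ)) × ℕ => x.1.2)
      (g := fun x c => (Sum.inl (x.2 + c) : ℕ ⊕ ℕ))
      (h := fun x d => if d < x.2 then Sum.inl (x.2 - d - 1) else Sum.inr (d - x.2))
      (snd.comp fst)
      (sumInl.comp (nat_add.comp (snd.comp fst) snd))
      (Primrec.ite (nat_lt.comp snd (snd.comp fst))
        (sumInl.comp (nat_sub.comp (nat_sub.comp (snd.comp fst) snd) (const 1)))
        (sumInr.comp (nat_sub.comp snd (snd.comp fst))))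
    exact this.of_eq fun x => by rcases x with ⟨⟨s, t⟩, a⟩; rcases t with c | d <;> rfl
  have i2 : Primrec₂ fun (q : (ℕ ⊕ ℕ) × (ℕ ⊕ ℕ)) (b : ℕ) => sadd (Sum.inr b) q.2 := by
    have := Primrec.sumCasesOn
      (f := fun x : ((ℕ ⊕ ℕ) × (ℕ ⊕ ℕ)) × ℕ => x.1.2)
      (g := fun x c => if x.2 < c then Sum.inl (c - x.2 - 1) else Sum.inr (x.2 - c))
      (h := fun x d => (Sum.inr (x.2 + d + 1) : ℕ ⊕ ℕ))
      (snd.comp fst)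
      (Primrec.ite (nat_lt.comp (snd.comp fst) snd)
        (sumInl.comp (nat_sub.comp (nat_sub.comp snd (snd.comp fst)) (const 1)))
        (sumInr.comp (nat_sub.comp (snd.comp fst) snd)))
      (sumInr.comp (nat_add.comp (nat_add.comp (snd.comp fst) snd) (const 1)))
    exact this.of_eq fun x => by rcases x with ⟨⟨s, t⟩, b⟩; rcases t with c | d <;> rfl
  have := Primrec.sumCasesOn
    (f := fun q : (ℕ ⊕ ℕ) × (ℕ ⊕ ℕ) => q.1)
    (g := fun q a => sadd (Sum.inl a) q.2)
    (h := fun q b => sadd (Sum.inr b) q.2)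
    fst i1 i2
  exact this.of_eq fun q => by rcases q with ⟨s, t⟩; rcases s with a | b <;> rfl

private lemma primrec_smul : Primrec₂ smul := by
  have i1 : Primrec₂ fun (q : (ℕ ⊕ ℕ) × (ℕ ⊕ ℕ)) (a : ℕ) => smul (Sum.inl a) q.2 := by
    have := Primrec.sumCasesOn
      (f := fun x : ((ℕ ⊕ ℕ) × (ℕ ⊕ ℕ)) × ℕ => x.1.2)
      (g := fun x c => (Sum.inl (x.2 * c) : ℕ ⊕ ℕ))
      (h := fun x d => if x.2 = 0 then Sum.inl 0 else Sum.inr (x.2 * (d + 1) - 1))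
      (snd.comp fst)
      (sumInl.comp (nat_mul.comp (snd.comp fst) snd))
      (Primrec.ite (Primrec.eq.comp (snd.comp fst) (const 0))
        (const (Sum.inl 0))
        (sumInr.comp (nat_sub.comp
          (nat_mul.comp (snd.comp fst) (nat_add.comp snd (const 1))) (const 1))))
    exact this.of_eq fun x => by rcases x with ⟨⟨s, t⟩, a⟩; rcases t with c | d <;> rfl
  have i2 : Primrec₂ fun (q : (ℕ ⊕ ℕ) × (ℕ ⊕ ℕ)) (b : ℕ) => smul (Sum.inr b) q.2 := by
    have := Primrec.sumCasesOn
      (f := fun x : ((ℕ ⊕ ℕ) × (ℕ ⊕ ℕ)) × ℕ => x.1.2)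
      (g := fun x c => if c = 0 then Sum.inl 0 else Sum.inr (c * (x.2 + 1) - 1))
      (h := fun x d => (Sum.inl ((x.2 + 1) * (d + 1)) : ℕ ⊕ ℕ))
      (snd.comp fst)
      (Primrec.ite (Primrec.eq.comp snd (const 0))
        (const (Sum.inl 0))
        (sumInr.comp (nat_sub.comp
          (nat_mul.comp snd (nat_add.comp (snd.comp fst) (const 1))) (const 1))))
      (sumInl.comp (nat_mul.comp (nat_add.comp (snd.comp fst) (const 1))
        (nat_add.comp snd (const 1))))
    exact this.of_eq fun x => by rcases x with ⟨⟨s, t⟩, b⟩; rcases t with c | d <;> rfl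
  have := Primrec.sumCasesOn
    (f := fun q : (ℕ ⊕ ℕ) × (ℕ ⊕ ℕ) => q.1)
    (g := fun q a => smul (Sum.inl a) q.2)
    (h := fun q b => smul (Sum.inr b) q.2)
    fst i1 i2
  exact this.of_eq fun q => by rcases q with ⟨s, t⟩; rcases s with a | b <;> rfl

private lemma primrec_sneg : Primrec sneg := by
  have := Primrec.sumCasesOn
    (f := @id (ℕ ⊕ ℕ))
    (g := fun _ (a : ℕ) => if a = 0 then (Sum.inl 0 : ℕ ⊕ ℕ) else Sum.inr (a - 1))
    (h := fun _ (b : ℕ) => (Sum.inl (b + 1) : ℕ ⊕ ℕ))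
    Primrec.id
    (Primrec.ite (Primrec.eq.comp snd (const 0)) (const (Sum.inl 0))
      (sumInr.comp (nat_sub.comp snd (const 1))))
    (sumInl.comp (nat_add.comp snd (const 1)))
  exact this.of_eq fun s => by rcases s with a | b <;> rfl

private lemma int_add : Primrec₂ ((· + ·) : ℤ → ℤ → ℤ) := by
  have : Primrec fun p : ℤ × ℤ => nti (sadd (itn p.1) (itn p.2)) :=
    primrec_nti.comp (primrec_sadd.comp (primrec_itn.comp fst) (primrec_itn.comp snd))
  exact this.of_eq fun p => by rw [nti_sadd, nti_itn, nti_itn]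

private lemma int_mul : Primrec₂ ((· * ·) : ℤ → ℤ → ℤ) := by
  have : Primrec fun p : ℤ × ℤ => nti (smul (itn p.1) (itn p.2)) :=
    primrec_nti.comp (primrec_smul.comp (primrec_itn.comp fst) (primrec_itn.comp snd))
  exact this.of_eq fun p => by rw [nti_smul, nti_itn, nti_itn]

private lemma int_neg : Primrec (fun z : ℤ => -z) := by
  have : Primrec fun z : ℤ => nti (sneg (itn z)) :=
    primrec_nti.comp (primrec_sneg.comp primrec_itn)
  exact this.of_eq fun z => by rw [nti_sneg, nti_itn]

private lemma int_sub : Primrec₂ ((· - ·) : ℤ → ℤ → ℤ) := by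
  have : Primrec fun p : ℤ × ℤ => p.1 + -p.2 := int_add.comp fst (int_neg.comp snd)
  exact this.of_eq fun p => (sub_eq_add_neg p.1 p.2).symm

private lemma int_natAbs : Primrec Int.natAbs := by
  have := Primrec.sumCasesOn
    (f := fun z : ℤ => itn z)
    (g := fun _ (a : ℕ) => a)
    (h := fun _ (b : ℕ) => b + 1)
    primrec_itn snd (nat_add.comp snd (const 1))
  exact this.of_eq fun z => by cases z <;> rfl

private lemma int_ofNat : Primrec (fun k : ℕ => (k : ℤ)) :=
  (primrec_nti.comp sumInl).of_eq fun k => rfl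

/-! ### Divisible elements of finitely generated abelian groups are trivial -/

private lemma eq_zero_of_divisible {G : Type} [AddCommGroup G] [hfg : AddGroup.FG G]
    (g : G) (h : ∀ N : ℕ, 0 < N → ∃ y : G, N • y = g) : g = 0 := by
  obtain ⟨r, ι, fι, p, hp, e, ⟨f⟩⟩ := AddCommGroup.equiv_free_prod_directSum_zmod G
  have hinj : Function.Injective f := f.injective
  apply hinj
  rw [map_zero]
  ext1
  · -- free part
    ext j
    set φ : G →+ ℤ :=
      (Finsupp.applyAddHom j).comp ((AddMonoidHom.fst _ _).comp f.toAddMonoidHom) with hφ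
    show φ g = 0
    by_contra hne
    obtain ⟨y, hy⟩ := h ((φ g).natAbs + 1) (Nat.succ_pos _)
    have hdvd : (((φ g).natAbs + 1 : ℕ) : ℤ) ∣ φ g := by
      refine ⟨φ y, ?_⟩
      have := congrArg φ hy
      rw [map_nsmul] at this
      rw [← nsmul_eq_mul]
      exact this.symm
    have hle := Int.le_of_dvd (abs_pos.mpr hne) ((dvd_abs _ _).mpr hdvd)
    rw [Int.abs_eq_natAbs] at hle
    push_cast at hle
    omega
  · -- torsion part
    refine DFunLike.ext _ _ fun i => ?_
    set q := p i ^ e i with hq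
    have hqpos : 0 < q := pow_pos (hp i).pos _
    set ψ : G →+ ZMod q :=
      (DFinsupp.evalAddMonoidHom i).comp ((AddMonoidHom.snd _ _).comp f.toAddMonoidHom) with hψ
    show ψ g = 0
    obtain ⟨y, hy⟩ := h q hqpos
    have := congrArg ψ hy
    rw [map_nsmul] at this
    rw [← this, nsmul_eq_mul, ZMod.natCast_self, zero_mul]

/-! ### If the system is solvable modulo every positive integer, it is solvable -/

private lemma solvable_of_all_mod {m n : ℕ} (A : Matrix (Fin m) (Fin n) ℤ) (b : Fin m → ℤ)
    (h : ∀ N : ℕ, 0 < N → ∃ x : Fin n → ℤ, ∀ i, (N : ℤ) ∣ (A.mulVec x - b) i) :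
    ∃ x : Fin n → ℤ, A.mulVec x = b := by
  set R : Submodule ℤ (Fin m → ℤ) := LinearMap.range A.mulVecLin with hR
  have hfin : Module.Finite ℤ ((Fin m → ℤ) ⧸ R) := inferInstance
  have hfg : AddGroup.FG ((Fin m → ℤ) ⧸ R) := Module.Finite.iff_addGroup_fg.mp hfin
  have hdiv : ∀ N : ℕ, 0 < N → ∃ y : (Fin m → ℤ) ⧸ R,
      N • y = Submodule.Quotient.mk b := by
    intro N hN
    obtain ⟨x, hx⟩ := h N hN
    set d : Fin m → ℤ := fun i => (A.mulVec x - b) i / N with hd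
    have hNd : A.mulVec x - b = (N : ℤ) • d := by
      funext i
      simp only [Pi.smul_apply, smul_eq_mul, hd]
      exact (Int.mul_ediv_cancel' (hx i)).symm
    refine ⟨Submodule.Quotient.mk (-d), ?_⟩
    have hb : b = A.mulVec x + (N : ℤ) • (-d) := by
      rw [smul_neg, ← hNd]; abel
    rw [← natCast_zsmul]
    calc (N : ℤ) • (Submodule.Quotient.mk (-d) : (Fin m → ℤ) ⧸ R)
        = Submodule.Quotient.mk ((N : ℤ) • (-d)) := by rw [Submodule.Quotient.mk_smul]
      _ = Submodule.Quotient.mk (A.mulVec x) + Submodule.Quotient.mk ((N : ℤ) • (-d)) := by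
          rw [show (Submodule.Quotient.mk (A.mulVec x) : (Fin m → ℤ) ⧸ R) = 0 from
            (Submodule.Quotient.mk_eq_zero R).mpr ⟨x, by simp⟩, zero_add]
      _ = Submodule.Quotient.mk b := by rw [← Submodule.Quotient.mk_add, ← hb]
  have hzero : (Submodule.Quotient.mk b : (Fin m → ℤ) ⧸ R) = 0 :=
    eq_zero_of_divisible _ hdiv
  obtain ⟨x, hx⟩ := (Submodule.Quotient.mk_eq_zero R).mp hzero
  exact ⟨x, hx⟩

/-! ### Enumeration of residue vectors -/

private def digitVec (n N c : ℕ) : Fin n → ℤ := fun j => ((c / N ^ (j : ℕ)) % N : ℕ)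

private def vecs (n N : ℕ) : List (Fin n → ℤ) := (List.range (N ^ n)).map (digitVec n N)

private lemma mem_vecs {n N : ℕ} (hN : 0 < N) (x : Fin n → ℤ)
    (hx : ∀ j, 0 ≤ x j ∧ x j < N) : x ∈ vecs n N := by
  set f : Fin n → Fin N := fun j => ⟨(x j).toNat, by
    have := hx j
    omega⟩ with hf
  set c : Fin (N ^ n) := finFunctionFinEquiv f with hc
  have hdig : digitVec n N c.val = x := by
    funext j
    have h1 : (finFunctionFinEquiv.symm c j : ℕ) = c.val / N ^ (j : ℕ) % N := rfl
    have h2 : finFunctionFinEquiv.symm c = f := Equiv.symm_apply_apply _ f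
    have h3 : c.val / N ^ (j : ℕ) % N = (x j).toNat := by
      rw [← h1, h2]
    show ((c.val / N ^ (j : ℕ) % N : ℕ) : ℤ) = x j
    rw [h3]
    exact Int.toNat_of_nonneg (hx j).1
  rw [← hdig]
  exact List.mem_map_of_mem (List.mem_range.mpr c.isLt)

private lemma vecs_nonneg {n N : ℕ} (hN : 0 < N) {y : Fin n → ℤ} (hy : y ∈ vecs n N) :
    ∀ j, 0 ≤ y j ∧ y j < N := by
  obtain ⟨c, _, rfl⟩ := List.mem_map.mp hy
  intro j
  constructor
  · exact Int.ofNat_nonneg _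
  · exact_mod_cast Nat.cast_lt.mpr (Nat.mod_lt _ hN)

/-! ### Primrec helpers -/

private lemma primrec_pow_const (k : ℕ) : Primrec fun N : ℕ => N ^ k := by
  induction k with
  | zero => exact (const 1).of_eq fun N => (pow_zero N).symm
  | succ k ih => exact (nat_mul.comp ih Primrec.id).of_eq fun N => (pow_succ N k).symm

private lemma primrec_fin_sum {β : Type} [Primcodable β] {k : ℕ} :
    ∀ {f : Fin k → β → ℤ}, (∀ i, Primrec (f i)) → Primrec fun a => ∑ i, f i a := by
  induction k with
  | zero => exact fun _ => (const 0).of_eq fun a => by simp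
  | succ k ih =>
    intro f h
    exact (int_add.comp (h 0) (ih fun i => h i.succ)).of_eq fun a =>
      (Fin.sum_univ_succ fun i => f i a).symm

private lemma primrec_list_any {β γ : Type} [Primcodable β] [Primcodable γ]
    {f : β → List γ} {q : β → γ → Bool} (hf : Primrec f) (hq : Primrec₂ q) :
    Primrec fun a => (f a).any (q a) := by
  have hh : Primrec₂ fun (a : β) (p : Bool × γ) => p.1 || q a p.2 :=
    ((dom_bool₂ (· || ·)).comp (fst.comp snd) (hq.comp fst (snd.comp snd)) :
      Primrec fun x : β × (Bool × γ) => x.2.1 || q x.1 x.2.2).to₂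
  have hfold := Primrec.list_foldl hf (const false) hh
  refine hfold.of_eq fun a => ?_
  have : ∀ (l : List γ) (s : Bool), l.foldl (fun s b => s || q a b) s = (s || l.any (q a)) := by
    intro l
    induction l with
    | nil => simp
    | cons c l ih =>
      intro s
      rw [List.foldl_cons, ih, List.any_cons]
      cases s <;> cases q a c <;> simp
  simpa using this (f a) false

end ILS

namespace ILS

section Main

variable (m n : ℕ)

private abbrev Inp (m n : ℕ) : Type := (Fin m → Fin n → ℤ) × (Fin m → ℤ)

private def mvApp (p : Inp m n) (x : Fin n → ℤ) : Fin m → ℤ := fun i => ∑ j, p.1 i j * x j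

private lemma mvApp_eq (p : Inp m n) (x : Fin n → ℤ) :
    mvApp m n p x = (Matrix.of p.1).mulVec x := by
  funext i
  simp [mvApp, Matrix.mulVec, dotProduct]

private lemma primrec_mvApp : Primrec₂ (mvApp m n) := by
  have h : ∀ i : Fin m, Primrec fun q : Inp m n × (Fin n → ℤ) => ∑ j, q.1.1 i j * q.2 j := by
    intro i
    refine primrec_fin_sum fun j => ?_
    exact int_mul.comp
      (Primrec.fin_app.comp (Primrec.fin_app.comp (Primrec.fst.comp Primrec.fst)
        (Primrec.const i)) (Primrec.const j))
      (Primrec.fin_app.comp Primrec.snd (Primrec.const j))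
  have h2 : Primrec₂ fun (q : Inp m n × (Fin n → ℤ)) (i : Fin m) => ∑ j, q.1.1 i j * q.2 j :=
    (Primrec.fin_curry₁.mpr h).swap
  exact Primrec.fin_curry.mpr h2

private def sol (p : Inp m n) : Prop := ∃ x : Fin n → ℤ, (Matrix.of p.1).mulVec x = p.2

private def trueTest (p : Inp m n) (k : ℕ) : Bool :=
  (@Encodable.decode (Fin n → ℤ) Primcodable.toEncodable k).casesOn false fun x =>
    decide (mvApp m n p x = p.2)

private lemma primrec_trueTest : Primrec₂ (trueTest m n) := by
  have hin : Primrec₂ fun (q : Inp m n × ℕ) (x : Fin n → ℤ) =>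
      decide (mvApp m n q.1 x = q.1.2) :=
    (Primrec.eq.comp (primrec_mvApp m n |>.comp (Primrec.fst.comp Primrec.fst) Primrec.snd)
      (Primrec.snd.comp (Primrec.fst.comp Primrec.fst))).decide
  exact Primrec.option_casesOn (Primrec.decode.comp Primrec.snd) (Primrec.const false) hin

private lemma trueTest_sound {p : Inp m n} {k : ℕ} (h : trueTest m n p k = true) : sol m n p := by
  unfold trueTest at h
  rcases hd : (@Encodable.decode (Fin n → ℤ) Primcodable.toEncodable k) with - | x
  · rw [hd] at h; simp at h
  · rw [hd] at h
    simp only [decide_eq_true_eq] at h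
    exact ⟨x, by rw [← mvApp_eq, h]⟩

private lemma sol_trueTest {p : Inp m n} (h : sol m n p) :
    ∃ k, trueTest m n p k = true := by
  obtain ⟨x, hx⟩ := h
  refine ⟨@Encodable.encode (Fin n → ℤ) Primcodable.toEncodable x, ?_⟩
  unfold trueTest
  rw [@Encodable.encodek (Fin n → ℤ) Primcodable.toEncodable x]
  simp [mvApp_eq, hx]

private def congTest (p : Inp m n) (N : ℕ) (x : Fin n → ℤ) : Bool :=
  decide ((fun i => (mvApp m n p x i - p.2 i).natAbs % N) = fun _ => 0)

private lemma primrec_congTest :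
    Primrec₂ fun (q : Inp m n × ℕ) (x : Fin n → ℤ) => congTest m n q.1 (q.2 + 1) x := by
  have h : ∀ i : Fin m, Primrec fun y : (Inp m n × ℕ) × (Fin n → ℤ) =>
      (mvApp m n y.1.1 y.2 i - y.1.1.2 i).natAbs % (y.1.2 + 1) := by
    intro i
    refine Primrec.nat_mod.comp (int_natAbs.comp (int_sub.comp ?_ ?_))
      (Primrec.succ.comp (Primrec.snd.comp Primrec.fst))
    · exact Primrec.fin_app.comp
        ((primrec_mvApp m n).comp (Primrec.fst.comp Primrec.fst) Primrec.snd) (Primrec.const i)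
    · exact Primrec.fin_app.comp
        (Primrec.snd.comp (Primrec.fst.comp Primrec.fst)) (Primrec.const i)
  have h2 : Primrec fun y : (Inp m n × ℕ) × (Fin n → ℤ) =>
      fun i => (mvApp m n y.1.1 y.2 i - y.1.1.2 i).natAbs % (y.1.2 + 1) :=
    Primrec.fin_curry.mpr ((Primrec.fin_curry₁.mpr h).swap)
  exact (Primrec.eq.comp h2 (Primrec.const (fun _ => 0))).decide

private lemma primrec_vecs : Primrec fun N : ℕ => vecs n N := by
  have hdig : Primrec₂ fun (N c : ℕ) => digitVec n N c := by
    have h : ∀ j : Fin n, Primrec fun q : ℕ × ℕ => ((q.2 / q.1 ^ (j : ℕ)) % q.1 : ℕ) := fun j =>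
      Primrec.nat_mod.comp
        (Primrec.nat_div.comp Primrec.snd ((primrec_pow_const (j : ℕ)).comp Primrec.fst))
        Primrec.fst
    have h' : ∀ j : Fin n, Primrec fun q : ℕ × ℕ => (((q.2 / q.1 ^ (j : ℕ)) % q.1 : ℕ) : ℤ) :=
      fun j => int_ofNat.comp (h j)
    exact Primrec.fin_curry.mpr ((Primrec.fin_curry₁.mpr h').swap)
  exact Primrec.list_map (Primrec.list_range.comp (primrec_pow_const n)) hdig

private def anyTest (p : Inp m n) (k : ℕ) : Bool :=
  (vecs n (k + 1)).any fun x => congTest m n p (k + 1) x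

private lemma primrec_anyTest : Primrec₂ (anyTest m n) :=
  primrec_list_any ((primrec_vecs n).comp (Primrec.succ.comp Primrec.snd))
    (primrec_congTest m n)

/-- The key combinatorial equivalence : `anyTest` is `true` iff the system is solvable
modulo `k+1`. -/
private lemma anyTest_iff (p : Inp m n) (k : ℕ) :
    anyTest m n p k = true ↔
      ∃ x : Fin n → ℤ, ∀ i, ((k + 1 : ℕ) : ℤ) ∣ (mvApp m n p x - p.2) i := by
  set N : ℕ := k + 1 with hN
  have hNpos : 0 < N := Nat.succ_pos k
  have congSound : ∀ x : Fin n → ℤ, congTest m n p N x = true ↔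
      ∀ i, (N : ℤ) ∣ (mvApp m n p x - p.2) i := by
    intro x
    unfold congTest
    rw [decide_eq_true_eq, funext_iff]
    apply forall_congr'
    intro i
    rw [Int.natCast_dvd]
    simp [Nat.dvd_iff_mod_eq_zero]
  constructor
  · intro h
    obtain ⟨x, _, hx⟩ := List.any_eq_true.mp h
    exact ⟨x, (congSound x).mp hx⟩
  · rintro ⟨x, hx⟩
    set x' : Fin n → ℤ := fun j => x j % (N : ℤ) with hx'
    have hbox : ∀ j, 0 ≤ x' j ∧ x' j < N := by
      intro j
      constructor
      · exact Int.emod_nonneg _ (by exact_mod_cast hNpos.ne')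
      · exact Int.emod_lt_of_pos _ (by exact_mod_cast hNpos)
    have hdvd' : ∀ j, (N : ℤ) ∣ (x' j - x j) := by
      intro j
      rw [hx']
      simp only [Int.emod_def]
      exact ⟨-(x j / N), by ring⟩
    have hdiff : ∀ i, (N : ℤ) ∣ (mvApp m n p x' i - mvApp m n p x i) := by
      intro i
      have : mvApp m n p x' i - mvApp m n p x i = ∑ j, p.1 i j * (x' j - x j) := by
        simp [mvApp, Finset.sum_sub_distrib, mul_sub]
      rw [this]
      exact Finset.dvd_sum fun j _ => Dvd.dvd.mul_left (hdvd' j) _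
    have hcong' : ∀ i, (N : ℤ) ∣ (mvApp m n p x' - p.2) i := by
      intro i
      have : (mvApp m n p x' - p.2) i =
          (mvApp m n p x' i - mvApp m n p x i) + (mvApp m n p x - p.2) i := by
        simp only [Pi.sub_apply]; ring
      rw [this]
      exact dvd_add (hdiff i) (hx i)
    refine List.any_eq_true.mpr ⟨x', mem_vecs hNpos x' hbox, (congSound x').mpr hcong'⟩

private lemma sol_anyTest {p : Inp m n} (h : sol m n p) (k : ℕ) : anyTest m n p k = true := by
  obtain ⟨x, hx⟩ := h
  refine (anyTest_iff m n p k).mpr ⟨x, fun i => ?_⟩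
  have : mvApp m n p x - p.2 = 0 := by rw [mvApp_eq, hx]; simp
  rw [this]
  simp

private lemma not_sol_anyTest {p : Inp m n} (h : ¬ sol m n p) :
    ∃ k, anyTest m n p k = false := by
  by_contra hc
  push_neg at hc
  apply h
  have hall : ∀ N : ℕ, 0 < N →
      ∃ x : Fin n → ℤ, ∀ i, (N : ℤ) ∣ ((Matrix.of p.1).mulVec x - p.2) i := by
    intro N hNpos
    obtain ⟨k, rfl⟩ : ∃ k, N = k + 1 := ⟨N - 1, by omega⟩
    have := (anyTest_iff m n p k).mp (by
      cases hv : anyTest m n p k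
      · exact absurd hv (hc k)
      · rfl)
    obtain ⟨x, hx⟩ := this
    exact ⟨x, fun i => by have := hx i; rwa [mvApp_eq] at this⟩
  obtain ⟨x, hx⟩ := solvable_of_all_mod (Matrix.of p.1) p.2 (by exact_mod_cast hall)
  exact ⟨x, hx⟩

private def stopTest (p : Inp m n) (k : ℕ) : Bool := trueTest m n p k || !anyTest m n p k

private lemma primrec_stopTest : Primrec₂ (stopTest m n) :=
  (Primrec.dom_bool₂ (fun a b => a || !b)).comp (primrec_trueTest m n) (primrec_anyTest m n)

private lemma stopTest_exists (p : Inp m n) : ∃ k, stopTest m n p k = true := by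
  by_cases h : sol m n p
  · obtain ⟨k, hk⟩ := sol_trueTest m n h
    exact ⟨k, by simp [stopTest, hk]⟩
  · obtain ⟨k, hk⟩ := not_sol_anyTest m n h
    exact ⟨k, by simp [stopTest, hk]⟩

end Main

end ILS

open ILS

/-- Solvability of integral linear systems `Ax = b` is computably decidable. -/
theorem computablePred_integral_linear_system (m n : ℕ) :
    ComputablePred fun p : (Fin m → Fin n → ℤ) × (Fin m → ℤ) =>
      ∃ x : Fin n → ℤ, (Matrix.of p.1).mulVec x = p.2 := by
  rw [ComputablePred.computable_iff]
  classical
  refine ⟨fun p => decide (sol m n p), ?_, ?_⟩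
  · -- computability
    have hF : Partrec fun p : Inp m n =>
        (Nat.rfind fun k => Part.some (stopTest m n p k)).map (trueTest m n p) :=
      Partrec.map
        (Partrec.rfind ((primrec_stopTest m n).to_comp.partrec₂))
        ((primrec_trueTest m n).to_comp)
    refine hF.of_eq_tot fun p => ?_
    have hdom : (Nat.rfind fun k => Part.some (stopTest m n p k)).Dom := by
      refine Nat.rfind_dom.mpr ?_
      obtain ⟨k, hk⟩ := stopTest_exists m n p
      exact ⟨k, by simpa using hk, fun {_} _ => trivial⟩
    set k₀ : ℕ := (Nat.rfind fun k => Part.some (stopTest m n p k)).get hdom with hk₀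
    have hmem : k₀ ∈ Nat.rfind fun k => Part.some (stopTest m n p k) := Part.get_mem hdom
    have hstop : stopTest m n p k₀ = true := by
      have := Nat.rfind_spec hmem
      simpa using this
    have hval : trueTest m n p k₀ = decide (sol m n p) := by
      by_cases h : sol m n p
      · have hany := sol_anyTest m n h k₀
        have : trueTest m n p k₀ = true := by
          rcases ht : trueTest m n p k₀
          · rw [stopTest, ht, hany] at hstop; simp at hstop
          · rfl
        rw [this, decide_eq_true h]
      · have : trueTest m n p k₀ = false := by
          rcases ht : trueTest m n p k₀
          · rfl
          · exact absurd (trueTest_sound m n ht) h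
        rw [this, decide_eq_false h]
    rw [← hval]
    exact Part.mem_map _ hmem
  · funext p
    have : sol m n p = ∃ x : Fin n → ℤ, (Matrix.of p.1).mulVec x = p.2 := rfl
    rw [← this]
    simp
end
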